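/- arXiv:1908.11621 — 2 statements merged into one kernel-verified Lean document; each statement's English description precedes it below -/
import Mathlib

section
/- Let s and t be two distinct vertices of a graph G and let l ≥ 1 be an integer. If (1,l) is a connectivity pair for s and t in G, then G contains l+1 edge-disjoint s-t paths of which two are internally disjoint. -/
open scoped Classical

namespace MGFlow

variable {V' A : Type} [DecidableEq A] (asrc atgt : A → V')

/-- Directed walks: lists of arcs, all in `S`, consecutively matched. -/
inductive Dw (S : Set A) : V' → List A → V' → Prop
  | nil (v : V') : Dw S v [] v
  | cons {w : V'} {L : List A} (a : A) (ha : a ∈ S) (p : Dw S (atgt a) L w) :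
      Dw S (asrc a) (a :: L) w

variable {asrc atgt}

theorem Dw.cons' {S : Set A} {u w : V'} {L : List A} (a : A) (ha : a ∈ S)
    (hu : asrc a = u) (p : Dw asrc atgt S (atgt a) L w) :
    Dw asrc atgt S u (a :: L) w := hu ▸ Dw.cons a ha p

theorem Dw.mono {S S' : Set A} (hSS : S ⊆ S') {u w : V'} {L : List A}
    (p : Dw asrc atgt S u L w) : Dw asrc atgt S' u L w := by
  induction p with
  | nil v => exact .nil v
  | cons a ha _ ih => exact .cons a (hSS ha) ih

theorem Dw.mem_of {S : Set A} {u w : V'} {L : List A}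
    (p : Dw asrc atgt S u L w) : ∀ a ∈ L, a ∈ S := by
  induction p with
  | nil v => simp
  | cons a ha _ ih =>
    intro b hb
    rcases List.mem_cons.1 hb with rfl | hb
    · exact ha
    · exact ih b hb

noncomputable def cntS (v : V') (L : List A) : ℕ := L.countP (fun a => decide (asrc a = v))
noncomputable def cntT (v : V') (L : List A) : ℕ := L.countP (fun a => decide (atgt a = v))

theorem Dw.cnt {S : Set A} {u w : V'} {L : List A} (p : Dw asrc atgt S u L w) (v : V') :
    cntS (asrc := asrc) v L + (if v = w then 1 else 0)
      = cntT (atgt := atgt) v L + (if v = u then 1 else 0) := by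
  induction p with
  | nil x => simp [cntS, cntT]
  | cons a ha p ih =>
    simp only [cntS, cntT, List.countP_cons] at ih ⊢
    by_cases h1 : asrc a = v <;> by_cases h2 : atgt a = v <;>
      simp only [h1, h2, if_pos, if_neg, decide_eq_true_eq] <;>
      · simp only [eq_comm (a := v)] at ih ⊢
        simp [h1, h2] at ih ⊢ <;> omega

end MGFlow
namespace MGFlow

variable {V' A : Type} [DecidableEq A] {asrc atgt : A → V'}

noncomputable def cIn (atgt : A → V') (f : Finset A) (v : V') : ℕ :=
  (f.filter fun a => atgt a = v).card
noncomputable def cOut (asrc : A → V') (f : Finset A) (v : V') : ℕ :=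
  (f.filter fun a => asrc a = v).card

theorem cIn_sdiff {f D : Finset A} (hD : D ⊆ f) (v : V') :
    cIn atgt (f \ D) v + cIn atgt D v = cIn atgt f v := by
  unfold cIn
  rw [show (f \ D).filter (fun a => atgt a = v) =
      f.filter (fun a => atgt a = v) \ D.filter (fun a => atgt a = v) by
    ext a; simp [Finset.mem_filter, Finset.mem_sdiff]; tauto]
  exact Finset.card_sdiff_add_card_eq_card (Finset.filter_subset_filter _ hD)

theorem cOut_sdiff {f D : Finset A} (hD : D ⊆ f) (v : V') :
    cOut asrc (f \ D) v + cOut asrc D v = cOut asrc f v := by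
  unfold cOut
  rw [show (f \ D).filter (fun a => asrc a = v) =
      f.filter (fun a => asrc a = v) \ D.filter (fun a => asrc a = v) by
    ext a; simp [Finset.mem_filter, Finset.mem_sdiff]; tauto]
  exact Finset.card_sdiff_add_card_eq_card (Finset.filter_subset_filter _ hD)

theorem cIn_toFinset {L : List A} (hL : L.Nodup) (v : V') :
    cIn atgt L.toFinset v = cntT (atgt := atgt) v L := by
  induction L with
  | nil => simp [cIn, cntT]
  | cons a L ih =>
    have ha : a ∉ L := (List.nodup_cons.1 hL).1
    have ih' := ih (List.nodup_cons.1 hL).2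
    simp only [cIn, cntT, List.toFinset_cons, List.countP_cons] at ih' ⊢
    rw [Finset.filter_insert]
    by_cases h : atgt a = v
    · rw [if_pos h, Finset.card_insert_of_notMem (by simp [ha]), ih']
      simp [h]
    · rw [if_neg h, ih']; simp [h]

theorem cOut_toFinset {L : List A} (hL : L.Nodup) (v : V') :
    cOut asrc L.toFinset v = cntS (asrc := asrc) v L := by
  induction L with
  | nil => simp [cOut, cntS]
  | cons a L ih =>
    have ha : a ∉ L := (List.nodup_cons.1 hL).1
    have ih' := ih (List.nodup_cons.1 hL).2
    simp only [cOut, cntS, List.toFinset_cons, List.countP_cons] at ih' ⊢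
    rw [Finset.filter_insert]
    by_cases h : asrc a = v
    · rw [if_pos h, Finset.card_insert_of_notMem (by simp [ha]), ih']
      simp [h]
    · rw [if_neg h, ih']; simp [h]

theorem cIn_erase {f : Finset A} {a : A} (haf : a ∈ f) (v : V') :
    cIn atgt (f.erase a) v + (if v = atgt a then 1 else 0) = cIn atgt f v := by
  have h := cIn_sdiff (f := f) (D := {a}) (atgt := atgt) (by simpa using haf) v
  have hz : cIn atgt ({a} : Finset A) v = if v = atgt a then 1 else 0 := by
    simp only [cIn, Finset.filter_singleton]
    by_cases h : atgt a = v
    · simp [h]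
    · rw [if_neg h, if_neg (fun hh : v = _ => h hh.symm)]; simp
  rw [Finset.sdiff_singleton_eq_erase] at h
  omega

theorem cOut_erase {f : Finset A} {a : A} (haf : a ∈ f) (v : V') :
    cOut asrc (f.erase a) v + (if v = asrc a then 1 else 0) = cOut asrc f v := by
  have h := cOut_sdiff (f := f) (D := {a}) (asrc := asrc) (by simpa using haf) v
  have hz : cOut asrc ({a} : Finset A) v = if v = asrc a then 1 else 0 := by
    simp only [cOut, Finset.filter_singleton]
    by_cases h : asrc a = v
    · simp [h]
    · rw [if_neg h, if_neg (fun hh : v = _ => h hh.symm)]; simp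
  rw [Finset.sdiff_singleton_eq_erase] at h
  omega

/-- Flows with value `m` from `σ` to `τ`. -/
def IsFlowV (asrc atgt : A → V') (S : Set A) (σ τ : V') (f : Finset A) (m : ℕ) : Prop :=
  (↑f : Set A) ⊆ S ∧ (∀ v, v ≠ σ → v ≠ τ → cIn atgt f v = cOut asrc f v) ∧
    cOut asrc f σ = cIn atgt f σ + m ∧ cIn atgt f τ = cOut asrc f τ + m


/-- From a vertex with out-excess there is a trail (within `f`) to a vertex with
in-excess. -/
theorem exists_trail_excess (hnl : ∀ a : A, asrc a ≠ atgt a) :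
    ∀ (f : Finset A) (u : V'), cIn atgt f u < cOut asrc f u →
      ∃ L w, Dw asrc atgt (↑f) u L w ∧ L.Nodup ∧ cOut asrc f w < cIn atgt f w := by
  intro f
  induction f using Finset.strongInduction with
  | _ f ih =>
    intro u hu
    have hex : ∃ a ∈ f, asrc a = u := by
      by_contra hc
      push_neg at hc
      have : f.filter (fun a => asrc a = u) = ∅ := by
        ext a; simp only [Finset.mem_filter, Finset.notMem_empty, iff_false, not_and]
        exact fun ha => hc a ha
      simp [cOut, this] at hu
    obtain ⟨a, haf, hau⟩ := hex
    by_cases hv : cOut asrc f (atgt a) < cIn atgt f (atgt a)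
    · refine ⟨[a], atgt a, ?_, by simp, hv⟩
      exact Dw.cons' a (by exact_mod_cast haf) hau (Dw.nil _)
    · push_neg at hv
      have hvin : 1 ≤ cIn atgt f (atgt a) := by
        have : a ∈ f.filter (fun b => atgt b = atgt a) := by simp [haf]
        exact Finset.card_pos.2 ⟨a, this⟩
      have hIn' := cIn_erase (atgt := atgt) haf (atgt a)
      have hOut' := cOut_erase (asrc := asrc) haf (atgt a)
      rw [if_pos rfl] at hIn'
      rw [if_neg (fun hh => (hnl a) hh.symm)] at hOut'
      have hrec : cIn atgt (f.erase a) (atgt a) < cOut asrc (f.erase a) (atgt a) := by omega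
      obtain ⟨L, w, hdw, hnd, hw⟩ := ih (f.erase a) (Finset.erase_ssubset haf) (atgt a) hrec
      have haL : a ∉ L := fun hmem => by
        have := hdw.mem_of a hmem
        simp at this
      have hwu : w ≠ u := by
        rintro rfl
        have hIw := cIn_erase (atgt := atgt) haf w
        have hOw := cOut_erase (asrc := asrc) haf w
        rw [if_neg (by rw [← hau]; exact fun hh => (hnl a) hh)] at hIw
        rw [if_pos hau.symm] at hOw
        omega
      refine ⟨a :: L, w, ?_, by simp [hnd, haL], ?_⟩
      · refine Dw.cons' a (by exact_mod_cast haf) hau (hdw.mono ?_)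
        intro b hb
        simp only [Finset.coe_erase, Set.mem_diff] at hb
        exact hb.1
      · have hIw := cIn_erase (atgt := atgt) haf w
        have hOw := cOut_erase (asrc := asrc) haf w
        rw [if_neg (by rw [hau]; exact hwu)] at hOw
        omega

end MGFlow
namespace MGFlow

variable {V' A : Type} [DecidableEq A] {asrc atgt : A → V'} {S : Set A} {σ τ : V'}

theorem flow_trail (hnl : ∀ a : A, asrc a ≠ atgt a) (hστ : σ ≠ τ) {f : Finset A} {m : ℕ}
    (hf : IsFlowV asrc atgt S σ τ f (m + 1)) :
    ∃ L, Dw asrc atgt (↑f) σ L τ ∧ L.Nodup := by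
  obtain ⟨hfS, hcons, hσ, hτ⟩ := hf
  obtain ⟨L, w, hdw, hnd, hw⟩ := exists_trail_excess hnl f σ (by omega)
  have hwσ : w ≠ σ := by intro h; rw [h] at hw; omega
  have hwτ : w = τ := by
    by_contra hq
    have := hcons w hwσ hq
    omega
  exact ⟨L, hwτ ▸ hdw, hnd⟩

/-- Removing a trail from a flow. -/
theorem flow_remove_trail (hστ : σ ≠ τ) {f : Finset A} {m : ℕ}
    (hf : IsFlowV asrc atgt S σ τ f (m + 1)) {L : List A} {S' : Set A}
    (hdw : Dw asrc atgt S' σ L τ) (hnd : L.Nodup) (hLf : ∀ a ∈ L, a ∈ f) :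
    IsFlowV asrc atgt S σ τ (f \ L.toFinset) m := by
  obtain ⟨hfS, hcons, hσ, hτ⟩ := hf
  have hsub : L.toFinset ⊆ f := by intro a ha; exact hLf a (List.mem_toFinset.1 ha)
  have hIn : ∀ v, cIn atgt (f \ L.toFinset) v + cntT (atgt := atgt) v L = cIn atgt f v := by
    intro v; rw [← cIn_toFinset hnd]; exact cIn_sdiff hsub v
  have hOut : ∀ v, cOut asrc (f \ L.toFinset) v + cntS (asrc := asrc) v L = cOut asrc f v := by
    intro v; rw [← cOut_toFinset hnd]; exact cOut_sdiff hsub v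
  refine ⟨?_, ?_, ?_, ?_⟩
  · intro a ha
    simp only [Finset.coe_sdiff, Set.mem_diff] at ha
    exact hfS ha.1
  · intro v hvσ hvτ
    have hcnt := hdw.cnt v
    rw [if_neg hvτ, if_neg hvσ] at hcnt
    have := hcons v hvσ hvτ
    have h1 := hIn v; have h2 := hOut v
    omega
  · have hcnt := hdw.cnt σ
    rw [if_neg hστ, if_pos rfl] at hcnt
    have h1 := hIn σ; have h2 := hOut σ
    omega
  · have hcnt := hdw.cnt τ
    rw [if_pos rfl, if_neg (Ne.symm hστ)] at hcnt
    have h1 := hIn τ; have h2 := hOut τ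
    omega

/-- Decomposition of a flow of value `m` into `m` disjoint trails. -/
theorem flow_decompose (hnl : ∀ a : A, asrc a ≠ atgt a) (hστ : σ ≠ τ) :
    ∀ (m : ℕ) (f : Finset A), IsFlowV asrc atgt S σ τ f m →
      ∃ T : Fin m → List A,
        (∀ i, Dw asrc atgt (↑f) σ (T i) τ ∧ (T i).Nodup ∧ ∀ a ∈ T i, a ∈ f) ∧
        (∀ i j, i ≠ j → ∀ a ∈ T i, a ∉ T j) := by
  intro m
  induction m with
  | zero => exact fun f _ => ⟨Fin.elim0, fun i => i.elim0, fun i => i.elim0⟩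
  | succ m ih =>
    intro f hf
    obtain ⟨L, hdw, hnd⟩ := flow_trail hnl hστ hf
    have hLf : ∀ a ∈ L, a ∈ f := fun a ha => by exact_mod_cast hdw.mem_of a ha
    have hf' := flow_remove_trail hστ hf hdw hnd hLf
    obtain ⟨T, hT, hTd⟩ := ih (f \ L.toFinset) hf'
    have hTf' : ∀ i, ∀ a ∈ T i, a ∈ f \ L.toFinset := fun i => (hT i).2.2
    refine ⟨Fin.cases L T, ?_, ?_⟩
    · intro i
      induction i using Fin.cases with
      | zero => exact ⟨by simpa using hdw, by simpa using hnd, by simpa using hLf⟩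
      | succ j =>
        refine ⟨?_, by simpa using (hT j).2.1, ?_⟩
        · simp only [Fin.cases_succ]
          refine (hT j).1.mono ?_
          intro a ha
          simp only [Finset.coe_sdiff, Set.mem_diff] at ha
          exact ha.1
        · intro a ha
          exact (Finset.mem_sdiff.1 (hTf' j a (by simpa using ha))).1
    · intro i j hij
      induction i using Fin.cases with
      | zero =>
        induction j using Fin.cases with
        | zero => exact absurd rfl hij
        | succ j' =>
          intro a ha haj
          have := hTf' j' a (by simpa using haj)
          rw [Finset.mem_sdiff] at this
          exact this.2 (List.mem_toFinset.2 (by simpa using ha))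
      | succ i' =>
        induction j using Fin.cases with
        | zero =>
          intro a ha haL
          have := hTf' i' a (by simpa using ha)
          rw [Finset.mem_sdiff] at this
          exact this.2 (List.mem_toFinset.2 (by simpa using haL))
        | succ j' =>
          intro a ha haj
          exact hTd i' j' (fun hh => hij (by rw [hh])) a (by simpa using ha) (by simpa using haj)

end MGFlow
namespace MGFlow

variable {V' A : Type} [DecidableEq A] {asrc atgt : A → V'} {S : Set A} {σ τ : V'}

/-- Residual walks w.r.t. a flow `f`: forward unused arcs / backward flow arcs. -/
inductive VR (asrc atgt : A → V') (S : Set A) (f : Finset A) : V' → List (A × Bool) → V' → Prop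
  | nil (v : V') : VR asrc atgt S f v [] v
  | fwd {w L} (a : A) (ha : a ∈ S) (hf : a ∉ f) (p : VR asrc atgt S f (atgt a) L w) :
      VR asrc atgt S f (asrc a) ((a, true) :: L) w
  | bwd {w L} (a : A) (hf : a ∈ f) (p : VR asrc atgt S f (asrc a) L w) :
      VR asrc atgt S f (atgt a) ((a, false) :: L) w

theorem VR.append {f : Finset A} {u v w : V'} {L₁ L₂ : List (A × Bool)}
    (h1 : VR asrc atgt S f u L₁ v) (h2 : VR asrc atgt S f v L₂ w) :
    VR asrc atgt S f u (L₁ ++ L₂) w := by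
  induction h1 with
  | nil => exact h2
  | fwd a ha hf _ ih => exact .fwd a ha hf (ih h2)
  | bwd a hf _ ih => exact .bwd a hf (ih h2)

theorem VR.split {f : Finset A} {u w : V'} {L₁ L₂ : List (A × Bool)}
    (h : VR asrc atgt S f u (L₁ ++ L₂) w) :
    ∃ v, VR asrc atgt S f u L₁ v ∧ VR asrc atgt S f v L₂ w := by
  induction L₁ generalizing u with
  | nil => exact ⟨u, .nil u, h⟩
  | cons x L₁ ih =>
    cases h with
    | fwd a ha hf p =>
      obtain ⟨v, hv1, hv2⟩ := ih p
      exact ⟨v, .fwd a ha hf hv1, hv2⟩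
    | bwd a hf p =>
      obtain ⟨v, hv1, hv2⟩ := ih p
      exact ⟨v, .bwd a hf hv1, hv2⟩

theorem map_dup_split {α β : Type*} {g : α → β} :
    ∀ {L : List α}, ¬ (L.map g).Nodup →
      ∃ (X Y Z : List α) (p q : α), L = X ++ p :: Y ++ q :: Z ∧ g p = g q := by
  intro L
  induction L with
  | nil => simp
  | cons e L ih =>
    intro h
    by_cases hL : (L.map g).Nodup
    · have : g e ∈ L.map g := by
        by_contra hc
        exact h (by simp [hL, hc])
      obtain ⟨q, hq, hgq⟩ := List.mem_map.1 this
      obtain ⟨Y, Z, rfl⟩ := List.append_of_mem hq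
      exact ⟨[], Y, Z, e, q, by simp, hgq.symm⟩
    · obtain ⟨X, Y, Z, p, q, rfl, hpq⟩ := ih hL
      exact ⟨e :: X, Y, Z, p, q, by simp, hpq⟩

theorem VR.toNodup {f : Finset A} {u w : V'} :
    ∀ {L : List (A × Bool)}, VR asrc atgt S f u L w →
      ∃ L', VR asrc atgt S f u L' w ∧ (L'.map Prod.fst).Nodup := by
  intro L
  generalize hn : L.length = n
  induction n using Nat.strong_induction_on generalizing L u with
  | _ n ih =>
    intro h
    by_cases hd : (L.map Prod.fst).Nodup
    · exact ⟨L, h, hd⟩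
    · obtain ⟨X, Y, Z, p, q, rfl, hpq⟩ := map_dup_split hd
      subst hn
      obtain ⟨v2, hXpY, hrest2⟩ := h.split
      cases hrest2 with
      | fwd a' ha' haf' hcont2 =>
        obtain ⟨v1, hX, hpY⟩ := hXpY.split
        cases hpY with
        | fwd a ha haf hY =>
          have haa : a = a' := hpq
          subst haa
          refine ih _ ?_ rfl (hX.append (VR.fwd a ha haf hcont2))
          simp
        | bwd a haf hY =>
          have haa : a = a' := hpq
          subst haa
          exact absurd haf haf'
      | bwd a' haf' hcont2 =>
        obtain ⟨v1, hX, hpY⟩ := hXpY.split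
        cases hpY with
        | fwd a ha haf hY =>
          have haa : a = a' := hpq
          subst haa
          exact absurd haf' haf
        | bwd a haf hY =>
          have haa : a = a' := hpq
          subst haa
          refine ih _ ?_ rfl (hX.append (VR.bwd a haf hcont2))
          simp

end MGFlow
namespace MGFlow

variable {V' A : Type} [DecidableEq A] {asrc atgt : A → V'} {S : Set A} {σ τ : V'}

theorem cIn_insert {f : Finset A} {a : A} (ha : a ∉ f) (v : V') :
    cIn atgt (insert a f) v = cIn atgt f v + (if v = atgt a then 1 else 0) := by
  unfold cIn
  rw [Finset.filter_insert]
  by_cases h : atgt a = v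
  · rw [if_pos h, Finset.card_insert_of_notMem (fun hc => ha (Finset.mem_filter.1 hc).1),
      if_pos h.symm]
  · rw [if_neg h, if_neg (fun hh => h hh.symm), add_zero]

theorem cOut_insert {f : Finset A} {a : A} (ha : a ∉ f) (v : V') :
    cOut asrc (insert a f) v = cOut asrc f v + (if v = asrc a then 1 else 0) := by
  unfold cOut
  rw [Finset.filter_insert]
  by_cases h : asrc a = v
  · rw [if_pos h, Finset.card_insert_of_notMem (fun hc => ha (Finset.mem_filter.1 hc).1),
      if_pos h.symm]
  · rw [if_neg h, if_neg (fun hh => h hh.symm), add_zero]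

theorem aug_aux {f : Finset A} (hfS : (↑f : Set A) ⊆ S) :
    ∀ {u : V'} {L : List (A × Bool)}, VR asrc atgt S f u L τ → (L.map Prod.fst).Nodup →
      ∃ f' : Finset A, (↑f' : Set A) ⊆ S ∧
        (∀ b : A, b ∈ f' → b ∈ f ∨ ((b, true) ∈ L)) ∧
        (∀ b ∈ f, ((b, false) ∉ L) → b ∈ f') ∧
        ∀ v, (cOut asrc f' v : ℤ) - cIn atgt f' v
            = (cOut asrc f v : ℤ) - cIn atgt f v
              + (if v = u then 1 else 0) - (if v = τ then 1 else 0) := by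
  intro u L hvr
  induction hvr with
  | nil v =>
    intro _
    exact ⟨f, hfS, fun b hb => Or.inl hb, fun b hb _ => hb, fun v' => by simp⟩
  | fwd a ha haf p ih =>
    intro hnd
    obtain ⟨f₁, h1, h2, h3, h4⟩ := ih (by simpa using hnd.of_cons)
    have haf₁ : a ∉ f₁ := by
      intro hc
      rcases h2 a hc with hc' | hc'
      · exact haf hc'
      · rw [List.map_cons, List.nodup_cons] at hnd
        exact hnd.1 (List.mem_map_of_mem (f := Prod.fst) hc')
    refine ⟨insert a f₁, ?_, ?_, ?_, ?_⟩
    · intro b hb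
      rcases Finset.mem_coe.1 hb |> Finset.mem_insert.1 with rfl | hb'
      · exact ha
      · exact h1 hb'
    · intro b hb
      rcases Finset.mem_insert.1 hb with rfl | hb'
      · exact Or.inr (by simp)
      · rcases h2 b hb' with hb'' | hb''
        · exact Or.inl hb''
        · exact Or.inr (List.mem_cons_of_mem _ hb'')
    · intro b hb hbL
      exact Finset.mem_insert_of_mem (h3 b hb (fun hc => hbL (List.mem_cons_of_mem _ hc)))
    · intro v
      have h5 := h4 v
      rw [cIn_insert haf₁, cOut_insert haf₁]
      push_cast
      split_ifs at h5 ⊢ <;> omega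
  | bwd a haf p ih =>
    intro hnd
    obtain ⟨f₁, h1, h2, h3, h4⟩ := ih (by simpa using hnd.of_cons)
    have haf₁ : a ∈ f₁ := by
      refine h3 a haf (fun hc => ?_)
      rw [List.map_cons, List.nodup_cons] at hnd
      exact hnd.1 (List.mem_map_of_mem (f := Prod.fst) hc)
    refine ⟨f₁.erase a, ?_, ?_, ?_, ?_⟩
    · intro b hb
      have : b ∈ f₁ := (Finset.mem_erase.1 (Finset.mem_coe.1 hb)).2
      exact h1 this
    · intro b hb
      rcases h2 b (Finset.mem_erase.1 hb).2 with hb' | hb'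
      · exact Or.inl hb'
      · exact Or.inr (List.mem_cons_of_mem _ hb')
    · intro b hb hbL
      have hba : b ≠ a := fun hc => hbL (by simp [hc])
      exact Finset.mem_erase.2 ⟨hba, h3 b hb (fun hc => hbL (List.mem_cons_of_mem _ hc))⟩
    · intro v
      have h5 := h4 v
      have e1 := cIn_erase (atgt := atgt) haf₁ v
      have e2 := cOut_erase (asrc := asrc) haf₁ v
      split_ifs at h5 e1 e2 ⊢ <;> omega

end MGFlow
namespace MGFlow

variable {V' A : Type} [DecidableEq A] {asrc atgt : A → V'} {S : Set A} {σ τ : V'}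

theorem flow_augment (hστ : σ ≠ τ) {f : Finset A} {m : ℕ}
    (hf : IsFlowV asrc atgt S σ τ f m) (hres : ∃ L, VR asrc atgt S f σ L τ) :
    ∃ f', IsFlowV asrc atgt S σ τ f' (m + 1) := by
  obtain ⟨L, hL⟩ := hres
  obtain ⟨L', hL', hnd⟩ := hL.toNodup
  obtain ⟨f', h1, _, _, h4⟩ := aug_aux hf.1 hL' hnd
  obtain ⟨_, hcons, hsrc, htgt⟩ := hf
  refine ⟨f', h1, ?_, ?_, ?_⟩
  · intro v hvσ hvτ
    have h5 := h4 v
    rw [if_neg hvσ, if_neg hvτ] at h5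
    have := hcons v hvσ hvτ
    omega
  · have h5 := h4 σ
    rw [if_pos rfl, if_neg hστ] at h5
    omega
  · have h5 := h4 τ
    rw [if_neg (Ne.symm hστ), if_pos rfl] at h5
    omega

/-- The reachable set in a residual graph. -/
def Rch (asrc atgt : A → V') (S : Set A) (f : Finset A) (σ v : V') : Prop :=
  ∃ L, VR asrc atgt S f σ L v

theorem cut_hits {f : Finset A} :
    ∀ {u w : V'} {LD : List A}, Dw asrc atgt S u LD w → ¬ Rch asrc atgt S f σ w →
      Rch asrc atgt S f σ u →
      ∃ a ∈ LD, a ∈ f ∧ Rch asrc atgt S f σ (asrc a) ∧ ¬ Rch asrc atgt S f σ (atgt a) := by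
  intro u w LD hdw
  induction hdw with
  | nil v => exact fun hτR hu => absurd hu hτR
  | cons a ha p ih =>
    intro hτR hu
    by_cases htgt : Rch asrc atgt S f σ (atgt a)
    · obtain ⟨b, hb, hbf⟩ := ih hτR htgt
      exact ⟨b, List.mem_cons_of_mem _ hb, hbf⟩
    · have haf : a ∈ f := by
        by_contra hc
        obtain ⟨L, hL⟩ := hu
        exact htgt ⟨L ++ [(a, true)], hL.append (VR.fwd a ha hc (VR.nil _))⟩
      exact ⟨a, List.mem_cons_self, haf, hu, htgt⟩

theorem cut_card {f : Finset A} {m : ℕ} (hf : IsFlowV asrc atgt S σ τ f m)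
    (hτR : ¬ Rch asrc atgt S f σ τ) :
    (f.filter (fun a => Rch asrc atgt S f σ (asrc a) ∧ ¬ Rch asrc atgt S f σ (atgt a))).card
      = m := by
  obtain ⟨hfS, hcons, hsrc, htgt⟩ := hf
  set Rp : V' → Prop := Rch asrc atgt S f σ with hRp
  -- tgt reachable implies src reachable for flow arcs
  have hback : ∀ a ∈ f, Rp (atgt a) → Rp (asrc a) := by
    intro a haf ⟨L, hL⟩
    exact ⟨L ++ [(a, false)], hL.append (VR.bwd a haf (VR.nil _))⟩
  set TF : Finset V' := (f.image asrc ∪ f.image atgt) ∪ {σ} with hTF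
  set RT : Finset V' := TF.filter Rp with hRT
  have hσRT : σ ∈ RT := by
    refine Finset.mem_filter.2 ⟨by simp [hTF], ⟨[], VR.nil σ⟩⟩
  have hsum : ∀ (g : A → V'), (∀ a ∈ f, g a ∈ TF) →
      ∑ v ∈ RT, (f.filter (fun a => g a = v)).card = (f.filter (fun a => Rp (g a))).card := by
    intro g hg
    rw [← Finset.card_biUnion]
    · congr 1
      ext a
      simp only [Finset.mem_biUnion, Finset.mem_filter, hRT]
      constructor
      · rintro ⟨v, ⟨hvTF, hvR⟩, haf, rfl⟩
        exact ⟨haf, hvR⟩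
      · rintro ⟨haf, hR⟩
        exact ⟨g a, ⟨hg a haf, hR⟩, haf, rfl⟩
    · intro x hx y hy hxy
      refine Finset.disjoint_left.2 fun a hax hay => ?_
      rw [Finset.mem_filter] at hax hay
      exact hxy (hax.2 ▸ hay.2 ▸ rfl)
  have hOutSum := hsum asrc (fun a haf =>
    Finset.mem_union_left _ (Finset.mem_union_left _ (Finset.mem_image_of_mem asrc haf)))
  have hInSum := hsum atgt (fun a haf =>
    Finset.mem_union_left _ (Finset.mem_union_right _ (Finset.mem_image_of_mem atgt haf)))
  -- value across the cut
  have hτRT : τ ∉ RT := fun hc => hτR (Finset.mem_filter.1 hc).2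
  have hsum2 : ∑ v ∈ RT, (f.filter (fun a => asrc a = v)).card
      = (∑ v ∈ RT, (f.filter (fun a => atgt a = v)).card) + m := by
    rw [← Finset.add_sum_erase _ _ hσRT, ← Finset.add_sum_erase _ _ hσRT]
    have : ∀ v ∈ RT.erase σ,
        (f.filter (fun a => asrc a = v)).card = (f.filter (fun a => atgt a = v)).card := by
      intro v hv
      have hvσ : v ≠ σ := (Finset.mem_erase.1 hv).1
      have hvτ : v ≠ τ := fun hc => hτRT (hc ▸ (Finset.mem_erase.1 hv).2)
      exact (hcons v hvσ hvτ).symm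
    rw [Finset.sum_congr rfl this]
    have := hsrc
    unfold cOut cIn at this
    omega
  rw [hOutSum, hInSum] at hsum2
  -- split the out-filter by reachability of the target
  have hsplit : (f.filter (fun a => Rp (asrc a))).card
      = (f.filter (fun a => Rp (asrc a) ∧ Rp (atgt a))).card
        + (f.filter (fun a => Rp (asrc a) ∧ ¬ Rp (atgt a))).card := by
    rw [← Finset.filter_filter, ← Finset.filter_filter]
    exact (Finset.card_filter_add_card_filter_not
      (s := f.filter (fun a => Rp (asrc a))) (p := fun a => Rp (atgt a))).symm
  have heq : f.filter (fun a => Rp (atgt a)) = f.filter (fun a => Rp (asrc a) ∧ Rp (atgt a)) := by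
    ext a
    simp only [Finset.mem_filter]
    exact ⟨fun ⟨haf, hR⟩ => ⟨haf, hback a haf hR, hR⟩, fun ⟨haf, _, hR⟩ => ⟨haf, hR⟩⟩
  rw [heq] at hsum2
  omega

/-- Max-flow existence from absence of small cuts. -/
theorem flow_exists (hnl : ∀ a : A, asrc a ≠ atgt a) (hστ : σ ≠ τ) {n : ℕ}
    (H : ∀ F : Finset A, (↑F : Set A) ⊆ S → F.card ≤ n →
      ∃ L, Dw asrc atgt S σ L τ ∧ ∀ a ∈ L, a ∉ F) :
    ∃ f, IsFlowV asrc atgt S σ τ f (n + 1) := by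
  have key : ∀ k, k ≤ n + 1 → ∃ f, IsFlowV asrc atgt S σ τ f k := by
    intro k
    induction k with
    | zero =>
      intro _
      refine ⟨∅, by simp, fun v _ _ => by simp [cIn, cOut], by simp [cIn, cOut], by simp [cIn, cOut]⟩
    | succ k ih =>
      intro hk
      obtain ⟨f, hf⟩ := ih (by omega)
      by_cases hres : Rch asrc atgt S f σ τ
      · exact flow_augment hστ hf hres
      · exfalso
        have hcard := cut_card hf hres
        set F := f.filter (fun a => Rch asrc atgt S f σ (asrc a) ∧ ¬ Rch asrc atgt S f σ (atgt a))
        obtain ⟨L, hdw, havoid⟩ := H F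
          (fun a ha => hf.1 (Finset.mem_coe.2 (Finset.mem_filter.1 ha).1))
          (by omega)
        obtain ⟨a, haL, haf, h1, h2⟩ := cut_hits hdw hres ⟨[], VR.nil σ⟩
        exact havoid a haL (Finset.mem_filter.2 ⟨haf, h1, h2⟩)
  exact key (n + 1) le_rfl

end MGFlow




/-- A multigraph on vertex type `V` with edges drawn from `E`: each edge `e` in the
edge set joins the two (distinct) vertices of `ends e`.  Parallel edges are allowed,
loops are not. -/
structure Multigraph (V : Type) (E : Type) where
  edgeSet : Set E
  ends : E → Sym2 V
  no_loops : ∀ e ∈ edgeSet, ¬ (ends e).IsDiag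

namespace Multigraph

variable {V E : Type}

/-- Walks in a multigraph. -/
inductive Walk (G : Multigraph V E) : V → V → Type
  | nil (v : V) : Walk G v v
  | cons {u v w : V} (e : E) (he : e ∈ G.edgeSet) (huv : G.ends e = s(u, v))
      (p : Walk G v w) : Walk G u w

namespace Walk

variable {G : Multigraph V E}

/-- The list of vertices visited by a walk. -/
def support : {u v : V} → G.Walk u v → List V
  | u, _, .nil _ => [u]
  | u, _, .cons _ _ _ p => u :: p.support

/-- The list of edges used by a walk. -/
def edges : {u v : V} → G.Walk u v → List E
  | _, _, .nil _ => []
  | _, _, .cons e _ _ p => e :: p.edges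

/-- A walk is a path if it visits no vertex twice. -/
def IsPath {u v : V} (p : G.Walk u v) : Prop := p.support.Nodup

end Walk

/-- Two walks are edge-disjoint if they share no edge. -/
def EdgeDisjoint {G : Multigraph V E} {u₁ v₁ u₂ v₂ : V}
    (p : G.Walk u₁ v₁) (q : G.Walk u₂ v₂) : Prop :=
  ∀ e, e ∈ p.edges → e ∉ q.edges

/-- Two `s`-`t` walks are internally disjoint if they share no vertices other
than `s` and `t`. -/
def InternallyDisjoint {G : Multigraph V E} {s t : V}
    (p q : G.Walk s t) : Prop :=
  ∀ v, v ∈ p.support → v ∈ q.support → v = s ∨ v = t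


/-- `(W, F)` is an `s`-`t` disconnecting pair: `W` is a set of vertices avoiding `s`
and `t`, `F` is a set of edges of `G`, and `G - W - F` contains no `s`-`t` path. -/
def DisconnectingPair (G : Multigraph V E) (s t : V) (W : Finset V) (F : Finset E) : Prop :=
  (↑W : Set V) ⊆ ({s, t} : Set V)ᶜ ∧ (↑F : Set E) ⊆ G.edgeSet ∧
    ∀ p : G.Walk s t, (∃ x ∈ p.support, x ∈ W) ∨ ∃ e ∈ p.edges, e ∈ F

/-- `(k, l)` is a connectivity pair for `s` and `t` in `G`: there is an `s`-`t`
disconnecting pair of order `k` and size `l`, but none of cardinality less than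
`k + l` having order at most `k` and size at most `l`. -/
def ConnectivityPair (G : Multigraph V E) (s t : V) (k l : ℕ) : Prop :=
  (∃ (W : Finset V) (F : Finset E), G.DisconnectingPair s t W F ∧ W.card = k ∧ F.card = l) ∧
    ¬ ∃ (W : Finset V) (F : Finset E), G.DisconnectingPair s t W F ∧
        W.card + F.card < k + l ∧ W.card ≤ k ∧ F.card ≤ l

/-- There are `k + l` pairwise edge-disjoint `s`-`t` paths in `G` of which `k + 1`
are pairwise internally disjoint. -/
def HasGoodPaths (G : Multigraph V E) (s t : V) (k l : ℕ) : Prop :=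
  ∃ P : Fin (k + l) → G.Walk s t,
    (∀ i, (P i).IsPath) ∧
    (∀ i j, i ≠ j → EdgeDisjoint (P i) (P j)) ∧
    ∃ S : Finset (Fin (k + l)), S.card = k + 1 ∧
      ∀ i ∈ S, ∀ j ∈ S, i ≠ j → InternallyDisjoint (P i) (P j)

end Multigraph

namespace Multigraph

variable {V E : Type} {G : Multigraph V E}

namespace Walk

theorem end_mem_support : ∀ {u v : V} (p : G.Walk u v), v ∈ p.support := by
  intro u v p
  induction p with
  | nil w => simp [support]
  | cons e he huv p ih => simp [support, ih]

theorem start_mem_support {u v : V} (p : G.Walk u v) : u ∈ p.support := by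
  cases p <;> simp [support]

theorem edges_mem_edgeSet : ∀ {u v : V} (p : G.Walk u v), ∀ e ∈ p.edges, e ∈ G.edgeSet := by
  intro u v p
  induction p with
  | nil w => simp [edges]
  | cons e he huv p ih =>
    intro e' he'
    rcases List.mem_cons.1 he' with rfl | he'
    · exact he
    · exact ih e' he'

/-- Extract the suffix of a walk starting at a vertex of its support. -/
theorem exists_suffix : ∀ {v t : V} (p : G.Walk v t) (u : V), u ∈ p.support →
    ∃ q : G.Walk u t, q.edges <:+ p.edges ∧ q.support <:+ p.support := by
  intro v t p
  induction p with
  | nil w =>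
    intro u hu
    simp [support] at hu
    subst hu
    exact ⟨.nil _, by simp, by simp⟩
  | @cons x y w e he huv p ih =>
    intro u hu
    rw [support, List.mem_cons] at hu
    rcases hu with rfl | hu
    · exact ⟨.cons e he huv p, by simp, by simp⟩
    · obtain ⟨q, h1, h2⟩ := ih u hu
      exact ⟨q, h1.trans (List.suffix_cons _ _), h2.trans (List.suffix_cons _ _)⟩

/-- Every walk contains a path with the same endpoints. -/
theorem exists_path : ∀ {u t : V} (p : G.Walk u t),
    ∃ q : G.Walk u t, q.IsPath ∧ (∀ e ∈ q.edges, e ∈ p.edges) ∧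
      (∀ x ∈ q.support, x ∈ p.support) := by
  intro u t p
  induction p with
  | nil w => exact ⟨.nil w, by simp [IsPath, support], by simp, by simp⟩
  | @cons x y w e he huv p ih =>
    obtain ⟨q, hq, hqe, hqs⟩ := ih
    by_cases hu : x ∈ q.support
    · obtain ⟨r, h1, h2⟩ := exists_suffix q x hu
      refine ⟨r, ?_, ?_, ?_⟩
      · exact List.Nodup.sublist h2.sublist hq
      · intro e' he'
        exact List.mem_cons_of_mem _ (hqe e' (h1.subset he'))
      · intro z hz
        exact List.mem_cons_of_mem _ (hqs z (h2.subset hz))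
    · refine ⟨.cons e he huv q, ?_, ?_, ?_⟩
      · exact List.nodup_cons.2 ⟨hu, hq⟩
      · intro e' he'
        rw [edges, List.mem_cons] at he' ⊢
        exact he'.imp _root_.id (hqe e')
      · intro z hz
        rw [support, List.mem_cons] at hz ⊢
        exact hz.imp _root_.id (hqs z)

end Walk

end Multigraph
namespace Multigraph

variable {V E : Type}

theorem sym2_exists (z : Sym2 V) : ∃ p : V × V, z = s(p.1, p.2) := by
  induction z using Sym2.ind with
  | _ x y => exact ⟨(x, y), rfl⟩

noncomputable def rep (G : Multigraph V E) (e : E) : V × V :=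
  Classical.choose (sym2_exists (G.ends e))

theorem rep_spec (G : Multigraph V E) (e : E) :
    G.ends e = s((G.rep e).1, (G.rep e).2) :=
  Classical.choose_spec (sym2_exists (G.ends e))

theorem rep_ne (G : Multigraph V E) {e : E} (he : e ∈ G.edgeSet) :
    (G.rep e).1 ≠ (G.rep e).2 := by
  intro hc
  apply G.no_loops e he
  rw [G.rep_spec e, hc]
  exact Sym2.mk_isDiag_iff.2 rfl

/-- Arcs of the auxiliary split networks. -/
abbrev Arc (V E : Type) : Type := (V × ℕ) ⊕ (E × Bool)

noncomputable def asrcG (G : Multigraph V E) : Arc V E → V × Bool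
  | .inl (v, _) => (v, false)
  | .inr (e, b) => ((if b then (G.rep e).1 else (G.rep e).2), true)

noncomputable def atgtG (G : Multigraph V E) : Arc V E → V × Bool
  | .inl (v, _) => (v, true)
  | .inr (e, b) => ((if b then (G.rep e).2 else (G.rep e).1), false)

theorem hnlG (G : Multigraph V E) : ∀ a : Arc V E, asrcG G a ≠ atgtG G a := by
  rintro (⟨v, i⟩ | ⟨e, b⟩) h
  · simpa [asrcG, atgtG] using congrArg Prod.snd h
  · simpa [asrcG, atgtG] using congrArg Prod.snd h

/-- The arc set of the capacitated split network. -/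
def S1 (G : Multigraph V E) (s t : V) (l : ℕ) : Set (Arc V E) :=
  {a | match a with
    | .inl (v, i) => v ≠ s ∧ v ≠ t ∧ i < l
    | .inr (e, _) => e ∈ G.edgeSet}

theorem edge_arc_choice (G : Multigraph V E) {e : E} {u v : V} (h : G.ends e = s(u, v)) :
    ∃ b : Bool, asrcG G (.inr (e, b)) = (u, true) ∧ atgtG G (.inr (e, b)) = (v, false) := by
  have hr := G.rep_spec e
  rw [h, Sym2.eq_iff] at hr
  rcases hr with ⟨h1, h2⟩ | ⟨h1, h2⟩
  · exact ⟨true, by simp [asrcG, ← h1], by simp [atgtG, ← h2]⟩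
  · exact ⟨false, by simp [asrcG, ← h1], by simp [atgtG, ← h2]⟩

/-- Lifting a path of `G` avoiding blocked arcs to a diwalk in the split network. -/
theorem lift_path (G : Multigraph V E) (s t : V) (l : ℕ) (F : Finset (Arc V E)) :
    ∀ (u : V) (p : G.Walk u t), p.IsPath → u ≠ t →
      (∀ v ∈ p.support, v ≠ u → v ≠ t →
        (v ≠ s ∧ v ≠ t ∧ ∃ i, i < l ∧ (Sum.inl (v, i) : Arc V E) ∉ F)) →
      (∀ e ∈ p.edges, e ∈ G.edgeSet ∧ (Sum.inr (e, true) : Arc V E) ∉ F ∧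
        (Sum.inr (e, false) : Arc V E) ∉ F) →
      ∃ L, MGFlow.Dw (asrcG G) (atgtG G) (S1 G s t l) (u, true) L (t, false) ∧
        ∀ a ∈ L, a ∉ F := by
  intro u p
  induction p with
  | nil w =>
    intro _ hut _ _
    exact absurd rfl hut
  | @cons x y w e he huv p ih =>
    intro hpath hxt hW hE
    obtain ⟨b, hb1, hb2⟩ := G.edge_arc_choice huv
    have heS : (Sum.inr (e, b) : Arc V E) ∈ S1 G s t l := he
    have heF := hE e (by rw [Walk.edges]; exact List.mem_cons_self)
    have hbF : (Sum.inr (e, b) : Arc V E) ∉ F := by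
      cases b
      · exact heF.2.2
      · exact heF.2.1
    have hpath' : p.IsPath := (List.nodup_cons.1 hpath).2
    have hxsup : x ∉ p.support := (List.nodup_cons.1 hpath).1
    cases p with
    | nil =>
      refine ⟨[Sum.inr (e, b)], ?_, ?_⟩
      · refine MGFlow.Dw.cons' _ heS hb1 ?_
        rw [hb2]
        exact MGFlow.Dw.nil _
      · intro a ha
        rw [List.mem_singleton] at ha
        subst ha
        exact hbF
    | @cons y' z' w' e' he' huv' p' =>
      set q : G.Walk y w := Walk.cons e' he' huv' p' with hq
      have hyq : y ∈ q.support := q.start_mem_support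
      have hyx : y ≠ x := fun hc => hxsup (hc ▸ hyq)
      have hyw : y ≠ w := by
        intro hc
        have hw' : w ∈ p'.support := p'.end_mem_support
        have : q.support = y :: p'.support := rfl
        have hnd : q.support.Nodup := hpath'
        rw [this, List.nodup_cons] at hnd
        exact hnd.1 (hc ▸ hw')
      obtain ⟨hys, hyt, i, hil, hiF⟩ :=
        hW y (List.mem_cons_of_mem _ hyq) hyx hyw
      have havS : (Sum.inl (y, i) : Arc V E) ∈ S1 G s w l := ⟨hys, hyt, hil⟩
      obtain ⟨L', hdw', havoid'⟩ := ih hpath' hyw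
        (fun v hv hvy hvw => hW v (List.mem_cons_of_mem _ hv) (fun hc => hxsup (hc ▸ hv)) hvw)
        (fun e'' he'' => hE e'' (List.mem_cons_of_mem _ he''))
      refine ⟨Sum.inr (e, b) :: Sum.inl (y, i) :: L', ?_, ?_⟩
      · refine MGFlow.Dw.cons' _ heS hb1 ?_
        rw [hb2]
        exact MGFlow.Dw.cons' _ havS rfl hdw'
      · intro a ha
        rcases List.mem_cons.1 ha with rfl | ha
        · exact hbF
        rcases List.mem_cons.1 ha with rfl | ha
        · exact hiF
        · exact havoid' a ha

end Multigraph
namespace Multigraph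

variable {V E : Type}

open MGFlow

theorem hyp_S1 (G : Multigraph V E) (s t : V) (hst : s ≠ t) (l : ℕ) (hl : 1 ≤ l)
    (hC : ¬ ∃ (W : Finset V) (F : Finset E), G.DisconnectingPair s t W F ∧
        W.card + F.card < 1 + l ∧ W.card ≤ 1 ∧ F.card ≤ l) :
    ∀ F : Finset (Arc V E), (↑F : Set (Arc V E)) ⊆ S1 G s t l → F.card ≤ l →
      ∃ L, Dw (asrcG G) (atgtG G) (S1 G s t l) (s, true) L (t, false) ∧ ∀ a ∈ L, a ∉ F := by
  intro F hFS hFcard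
  set W : Finset V := (F.image (Sum.elim Prod.fst (fun _ => s))).filter
    (fun v => v ≠ s ∧ v ≠ t ∧ ∀ i < l, (Sum.inl (v, i) : Arc V E) ∈ F) with hW
  set FG : Finset E := F.biUnion
    (Sum.elim (fun _ => (∅ : Finset E)) (fun x => {x.1})) with hFG
  have memW : ∀ v : V, v ∈ W ↔ (v ≠ s ∧ v ≠ t ∧ ∀ i < l, (Sum.inl (v, i) : Arc V E) ∈ F) := by
    intro v
    rw [hW, Finset.mem_filter]
    constructor
    · exact fun h => h.2
    · intro h
      refine ⟨Finset.mem_image.2 ⟨Sum.inl (v, 0), h.2.2 0 hl, rfl⟩, h⟩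
  have memFG : ∀ e : E, e ∈ FG ↔ ∃ b, (Sum.inr (e, b) : Arc V E) ∈ F := by
    intro e
    rw [hFG, Finset.mem_biUnion]
    constructor
    · rintro ⟨(⟨v, i⟩ | ⟨e', b⟩), ha, hmem⟩
      · simp at hmem
      · simp only [Sum.elim_inr, Finset.mem_singleton] at hmem
        exact ⟨b, hmem ▸ ha⟩
    · rintro ⟨b, hb⟩
      exact ⟨Sum.inr (e, b), hb, by simp⟩
  -- the cardinality bound
  have hcard : l * W.card + FG.card ≤ F.card := by
    have hB : (W.biUnion (fun v => (Finset.range l).image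
        (fun i => (Sum.inl (v, i) : Arc V E)))).card = l * W.card := by
      rw [Finset.card_biUnion]
      · rw [Finset.sum_congr rfl (fun v _ => ?_), Finset.sum_const, smul_eq_mul, mul_comm]
        rw [Finset.card_image_of_injective _ (fun i j hij => by simpa using hij),
          Finset.card_range]
      · intro u hu v hv huv
        refine Finset.disjoint_left.2 fun a ha hb => ?_
        simp only [Finset.mem_image] at ha hb
        obtain ⟨i, _, rfl⟩ := ha
        obtain ⟨j, _, hj⟩ := hb
        simp only [Sum.inl.injEq, Prod.mk.injEq] at hj
        exact huv (hj.1.symm ▸ rfl)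
    have hBsub : (W.biUnion (fun v => (Finset.range l).image
        (fun i => (Sum.inl (v, i) : Arc V E)))) ⊆ F.filter (fun a => a.isLeft) := by
      intro a ha
      simp only [Finset.mem_biUnion, Finset.mem_image, Finset.mem_range] at ha
      obtain ⟨v, hv, i, hi, rfl⟩ := ha
      exact Finset.mem_filter.2 ⟨((memW v).1 hv).2.2 i hi, rfl⟩
    have h1 : l * W.card ≤ (F.filter (fun a => a.isLeft)).card := by
      rw [← hB]; exact Finset.card_le_card hBsub
    have h2 : FG.card ≤ (F.filter (fun a => ¬ a.isLeft)).card := by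
      have : FG = (F.filter (fun a => ¬ a.isLeft)).biUnion
          (Sum.elim (fun _ => (∅ : Finset E)) (fun x => {x.1})) := by
        ext e
        rw [memFG, Finset.mem_biUnion]
        constructor
        · rintro ⟨b, hb⟩
          exact ⟨Sum.inr (e, b), Finset.mem_filter.2 ⟨hb, by simp⟩, by simp⟩
        · rintro ⟨(⟨v, i⟩ | ⟨e', b⟩), ha, hmem⟩
          · simp at hmem
          · simp only [Sum.elim_inr, Finset.mem_singleton] at hmem
            exact ⟨b, hmem ▸ (Finset.mem_filter.1 ha).1⟩
      rw [this]
      refine (Finset.card_biUnion_le).trans ?_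
      refine Finset.sum_le_card_nsmul _ _ 1 (fun a _ => ?_) |>.trans (by simp)
      rcases a with ⟨v, i⟩ | ⟨e', b⟩ <;> simp
    have h3 := Finset.card_filter_add_card_filter_not
      (s := F) (p := fun a : Arc V E => a.isLeft = true)
    omega
  -- the pair (W, FG) is not disconnecting
  have hA : (↑W : Set V) ⊆ ({s, t} : Set V)ᶜ := by
    intro v hv
    have := (memW v).1 (Finset.mem_coe.1 hv)
    simp only [Set.mem_compl_iff, Set.mem_insert_iff, Set.mem_singleton_iff]
    tauto
  have hB2 : (↑FG : Set E) ⊆ G.edgeSet := by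
    intro e he
    obtain ⟨b, hb⟩ := (memFG e).1 (Finset.mem_coe.1 he)
    exact hFS hb
  have hwle : W.card ≤ 1 := by
    by_contra hw
    push_neg at hw
    have h2 : l * 2 ≤ l * W.card := Nat.mul_le_mul_left l hw
    omega
  have hkey : W.card + FG.card < 1 + l ∧ FG.card ≤ l := by
    rcases Nat.le_one_iff_eq_zero_or_eq_one.1 hwle with h0 | h0 <;> rw [h0] at hcard
    · rw [Nat.mul_zero] at hcard
      exact ⟨by omega, by omega⟩
    · rw [Nat.mul_one] at hcard
      exact ⟨by omega, by omega⟩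
  have hnD : ¬ (∀ p : G.Walk s t, (∃ x ∈ p.support, x ∈ W) ∨ ∃ e ∈ p.edges, e ∈ FG) := by
    intro hC'
    exact hC ⟨W, FG, ⟨hA, hB2, hC'⟩, by omega, hwle, hkey.2⟩
  push_neg at hnD
  obtain ⟨p, hp1, hp2⟩ := hnD
  obtain ⟨q, hq, hqe, hqs⟩ := Walk.exists_path p
  refine lift_path G s t l F s q hq hst ?_ ?_
  · intro v hv hvs hvt
    refine ⟨hvs, hvt, ?_⟩
    have hvW : v ∉ W := fun hc => hp1 v (hqs v hv) hc
    rw [memW] at hvW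
    push_neg at hvW
    obtain ⟨i, hi1, hi2⟩ := hvW hvs hvt
    exact ⟨i, hi1, hi2⟩
  · intro e he
    have heG : e ∈ G.edgeSet := Walk.edges_mem_edgeSet q e he
    have heFG : e ∉ FG := fun hc => hp2 e (hqe e he) hc
    rw [memFG] at heFG
    push_neg at heFG
    exact ⟨heG, heFG true, heFG false⟩

end Multigraph
namespace Multigraph

variable {V E : Type}

open MGFlow

theorem arc_src_false {G : Multigraph V E} {a : Arc V E} {v : V}
    (h : asrcG G a = (v, false)) : ∃ j, a = Sum.inl (v, j) := by
  rcases a with ⟨v', j⟩ | ⟨e, b⟩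
  · refine ⟨j, ?_⟩
    simp only [asrcG, Prod.mk.injEq] at h
    rw [h.1]
  · simp only [asrcG, Prod.mk.injEq] at h
    exact absurd h.2 (by simp)

theorem arc_tgt_true {G : Multigraph V E} {a : Arc V E} {v : V}
    (h : atgtG G a = (v, true)) : ∃ j, a = Sum.inl (v, j) := by
  rcases a with ⟨v', j⟩ | ⟨e, b⟩
  · refine ⟨j, ?_⟩
    simp only [atgtG, Prod.mk.injEq] at h
    rw [h.1]
  · simp only [atgtG, Prod.mk.injEq] at h
    exact absurd h.2 (by simp)

theorem no_inl_st {G : Multigraph V E} {s t : V} {l : ℕ} {f : Finset (Arc V E)}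
    (hfS : (↑f : Set (Arc V E)) ⊆ S1 G s t l) {v : V} {j : ℕ}
    (hv : v = s ∨ v = t) : (Sum.inl (v, j) : Arc V E) ∉ f := by
  intro hc
  have := hfS hc
  rcases hv with rfl | rfl
  · exact this.1 rfl
  · exact this.2.1 rfl

theorem cOut_false_st {G : Multigraph V E} {s t : V} {l : ℕ} {f : Finset (Arc V E)}
    (hfS : (↑f : Set (Arc V E)) ⊆ S1 G s t l) {v : V} (hv : v = s ∨ v = t) :
    cOut (asrcG G) f (v, false) = 0 := by
  rw [cOut, Finset.card_eq_zero]
  ext a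
  simp only [Finset.mem_filter, Finset.notMem_empty, iff_false, not_and]
  intro ha hsrc
  obtain ⟨j, rfl⟩ := arc_src_false hsrc
  exact no_inl_st hfS hv ha

theorem cIn_true_st {G : Multigraph V E} {s t : V} {l : ℕ} {f : Finset (Arc V E)}
    (hfS : (↑f : Set (Arc V E)) ⊆ S1 G s t l) {v : V} (hv : v = s ∨ v = t) :
    cIn (atgtG G) f (v, true) = 0 := by
  rw [cIn, Finset.card_eq_zero]
  ext a
  simp only [Finset.mem_filter, Finset.notMem_empty, iff_false, not_and]
  intro ha htgt
  obtain ⟨j, rfl⟩ := arc_tgt_true htgt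
  exact no_inl_st hfS hv ha

theorem cIn_pos {W' A' : Type} {atgt : A' → W'} {f : Finset A'} {a : A'} {v : W'}
    (ha : a ∈ f) (h : atgt a = v) : 1 ≤ cIn atgt f v :=
  Finset.card_pos.2 ⟨a, Finset.mem_filter.2 ⟨ha, h⟩⟩

theorem cOut_pos {W' A' : Type} {asrc : A' → W'} {f : Finset A'} {a : A'} {v : W'}
    (ha : a ∈ f) (h : asrc a = v) : 1 ≤ cOut asrc f v :=
  Finset.card_pos.2 ⟨a, Finset.mem_filter.2 ⟨ha, h⟩⟩

theorem cOut_exists {W' A' : Type} {asrc : A' → W'} {f : Finset A'} {v : W'}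
    (h : 1 ≤ cOut asrc f v) : ∃ a ∈ f, asrc a = v := by
  obtain ⟨a, ha⟩ := Finset.card_pos.1 h
  rw [Finset.mem_filter] at ha
  exact ⟨a, ha.1, ha.2⟩

/-- A minimum-cardinality flow uses each edge in at most one direction. -/
theorem no_both (G : Multigraph V E) (s t : V) (hst : s ≠ t) (l : ℕ) {f : Finset (Arc V E)}
    {m : ℕ}
    (hf : IsFlowV (asrcG G) (atgtG G) (S1 G s t l) (s, true) (t, false) f m)
    (hmin : ∀ f' : Finset (Arc V E),
      IsFlowV (asrcG G) (atgtG G) (S1 G s t l) (s, true) (t, false) f' m → f.card ≤ f'.card)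
    (e : E) :
    ¬ ((Sum.inr (e, true) : Arc V E) ∈ f ∧ (Sum.inr (e, false) : Arc V E) ∈ f) := by
  rintro ⟨hp, hm⟩
  obtain ⟨hfS, hcons, hσ, hτ⟩ := hf
  set x := (G.rep e).1 with hx
  set y := (G.rep e).2 with hy
  have hxy : x ≠ y := G.rep_ne (hfS hp)
  have hsp : asrcG G (Sum.inr (e, true)) = (x, true) := by simp [asrcG, hx]
  have htp : atgtG G (Sum.inr (e, true)) = (y, false) := by simp [atgtG, hy]
  have hsm : asrcG G (Sum.inr (e, false)) = (y, true) := by simp [asrcG, hy]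
  have htm : atgtG G (Sum.inr (e, false)) = (x, false) := by simp [atgtG, hx]
  -- the endpoints are internal
  have hxst : x ≠ s ∧ x ≠ t := by
    constructor
    · intro hc
      have h0 := cOut_false_st hfS (Or.inl rfl)
      have h1 := hcons (s, false) (by simp) (by simp [hst])
      have h2 := cIn_pos hm (hc ▸ htm)
      omega
    · intro hc
      have h0 := cIn_true_st hfS (Or.inr rfl)
      have h1 := hcons (t, true) (by simp [Ne.symm hst]) (by simp)
      have h2 := cOut_pos hp (hc ▸ hsp)
      omega
  have hyst : y ≠ s ∧ y ≠ t := by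
    constructor
    · intro hc
      have h0 := cOut_false_st hfS (Or.inl rfl)
      have h1 := hcons (s, false) (by simp) (by simp [hst])
      have h2 := cIn_pos hp (hc ▸ htp)
      omega
    · intro hc
      have h0 := cIn_true_st hfS (Or.inr rfl)
      have h1 := hcons (t, true) (by simp [Ne.symm hst]) (by simp)
      have h2 := cOut_pos hm (hc ▸ hsm)
      omega
  -- vertex arcs at x and y
  have hax : ∃ jx, (Sum.inl (x, jx) : Arc V E) ∈ f := by
    have h1 := hcons (x, false) (by simp) (by simp [hxst.2])
    have h2 := cIn_pos hm htm
    obtain ⟨a, ha, hsrc⟩ := cOut_exists (f := f) (v := ((x : V), false)) (h1 ▸ h2)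
    obtain ⟨j, rfl⟩ := arc_src_false hsrc
    exact ⟨j, ha⟩
  have hay : ∃ jy, (Sum.inl (y, jy) : Arc V E) ∈ f := by
    have h1 := hcons (y, false) (by simp) (by simp [hyst.2])
    have h2 := cIn_pos hp htp
    obtain ⟨a, ha, hsrc⟩ := cOut_exists (f := f) (v := ((y : V), false)) (h1 ▸ h2)
    obtain ⟨j, rfl⟩ := arc_src_false hsrc
    exact ⟨j, ha⟩
  obtain ⟨jx, hjx⟩ := hax
  obtain ⟨jy, hjy⟩ := hay
  set D : Finset (Arc V E) := insert (Sum.inr (e, true)) (insert (Sum.inr (e, false))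
    (insert (Sum.inl (x, jx)) {(Sum.inl (y, jy) : Arc V E)})) with hD
  have hDsub : D ⊆ f := by
    intro a ha
    simp only [hD, Finset.mem_insert, Finset.mem_singleton] at ha
    rcases ha with rfl | rfl | rfl | rfl
    · exact hp
    · exact hm
    · exact hjx
    · exact hjy
  have hDcard : D.card = 4 := by
    rw [hD]
    rw [Finset.card_insert_of_notMem (by simp), Finset.card_insert_of_notMem (by simp),
      Finset.card_insert_of_notMem (by simp [hxy]), Finset.card_singleton]
  have hDbal : ∀ v : V × Bool, cIn (atgtG G) D v = cOut (asrcG G) D v := by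
    intro v
    rw [cIn, cOut, Finset.card_filter, Finset.card_filter, hD]
    rw [Finset.sum_insert (by simp), Finset.sum_insert (by simp),
      Finset.sum_insert (by simp [hxy]), Finset.sum_singleton,
      Finset.sum_insert (by simp), Finset.sum_insert (by simp),
      Finset.sum_insert (by simp [hxy]), Finset.sum_singleton]
    rw [htp, htm, hsp, hsm]
    have h1 : atgtG G (Sum.inl (x, jx)) = (x, true) := rfl
    have h2 : atgtG G (Sum.inl (y, jy)) = (y, true) := rfl
    have h3 : asrcG G (Sum.inl (x, jx)) = (x, false) := rfl
    have h4 : asrcG G (Sum.inl (y, jy)) = (y, false) := rfl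
    rw [h1, h2, h3, h4]
    ring
  -- the smaller flow
  have hflow' : IsFlowV (asrcG G) (atgtG G) (S1 G s t l) (s, true) (t, false) (f \ D) m := by
    refine ⟨?_, ?_, ?_, ?_⟩
    · intro a ha
      simp only [Finset.coe_sdiff, Set.mem_diff] at ha
      exact hfS ha.1
    · intro v hv1 hv2
      have e1 := cIn_sdiff (atgt := atgtG G) hDsub v
      have e2 := cOut_sdiff (asrc := asrcG G) hDsub v
      have e3 := hDbal v
      have e4 := hcons v hv1 hv2
      rw [← e1, ← e2] at e4
      rw [e3] at e4
      exact Nat.add_right_cancel e4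
    · have e1 := cIn_sdiff (atgt := atgtG G) hDsub (s, true)
      have e2 := cOut_sdiff (asrc := asrcG G) hDsub (s, true)
      have e3 := hDbal (s, true)
      rw [← e1, ← e2] at hσ
      rw [e3] at hσ
      omega
    · have e1 := cIn_sdiff (atgt := atgtG G) hDsub (t, false)
      have e2 := cOut_sdiff (asrc := asrcG G) hDsub (t, false)
      have e3 := hDbal (t, false)
      rw [← e1, ← e2] at hτ
      rw [e3] at hτ
      omega
  have := hmin _ hflow'
  have hlt : (f \ D).card < f.card := by
    rw [Finset.card_sdiff_of_subset hDsub, hDcard]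
    have : 4 ≤ f.card := by
      calc 4 = D.card := hDcard.symm
      _ ≤ f.card := Finset.card_le_card hDsub
    omega
  omega

end Multigraph
namespace MGFlow

variable {V' A : Type} [DecidableEq A] {asrc atgt : A → V'} {S : Set A} {σ τ : V'}

theorem exists_min_flow {m : ℕ} (h : ∃ f, IsFlowV asrc atgt S σ τ f m) :
    ∃ f, IsFlowV asrc atgt S σ τ f m ∧
      ∀ f', IsFlowV asrc atgt S σ τ f' m → f.card ≤ f'.card := by
  classical
  obtain ⟨f0, hf0⟩ := h
  have hP : ∃ c, ∃ f, IsFlowV asrc atgt S σ τ f m ∧ f.card = c := ⟨f0.card, f0, hf0, rfl⟩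
  obtain ⟨f, hf, hfc⟩ := Nat.find_spec hP
  refine ⟨f, hf, fun f' hf' => ?_⟩
  rw [hfc]
  exact Nat.find_le ⟨f', hf', rfl⟩

end MGFlow

namespace Multigraph

variable {V E : Type}

open MGFlow

def vertsOf (L : List (Arc V E)) : List V :=
  L.filterMap (fun a => match a with | .inl (v, _) => some v | .inr _ => none)

def edgesOf (L : List (Arc V E)) : List E :=
  L.filterMap (fun a => match a with | .inl _ => none | .inr (e, _) => some e)

@[simp] theorem vertsOf_nil : vertsOf ([] : List (Arc V E)) = [] := rfl
@[simp] theorem vertsOf_cons_inl (v : V) (i : ℕ) (L : List (Arc V E)) :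
    vertsOf (Sum.inl (v, i) :: L) = v :: vertsOf L := rfl
@[simp] theorem vertsOf_cons_inr (x : E × Bool) (L : List (Arc V E)) :
    vertsOf (Sum.inr x :: L) = vertsOf L := rfl
@[simp] theorem edgesOf_nil : edgesOf ([] : List (Arc V E)) = [] := rfl
@[simp] theorem edgesOf_cons_inl (v : V) (i : ℕ) (L : List (Arc V E)) :
    edgesOf (Sum.inl (v, i) :: L) = edgesOf L := rfl
@[simp] theorem edgesOf_cons_inr (e : E) (b : Bool) (L : List (Arc V E)) :
    edgesOf (Sum.inr (e, b) :: L) = e :: edgesOf L := rfl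

theorem mem_vertsOf {L : List (Arc V E)} {v : V} :
    v ∈ vertsOf L ↔ ∃ i, (Sum.inl (v, i) : Arc V E) ∈ L := by
  rw [vertsOf, List.mem_filterMap]
  constructor
  · rintro ⟨(⟨v', i⟩ | x), ha, hv⟩
    · simp only [Option.some.injEq] at hv
      exact ⟨i, hv ▸ ha⟩
    · simp at hv
  · rintro ⟨i, hi⟩
    exact ⟨Sum.inl (v, i), hi, rfl⟩

theorem mem_edgesOf {L : List (Arc V E)} {e : E} :
    e ∈ edgesOf L ↔ ∃ b, (Sum.inr (e, b) : Arc V E) ∈ L := by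
  rw [edgesOf, List.mem_filterMap]
  constructor
  · rintro ⟨(⟨v', i⟩ | ⟨e', b⟩), ha, hv⟩
    · simp at hv
    · simp only [Option.some.injEq] at hv
      exact ⟨b, hv ▸ ha⟩
  · rintro ⟨b, hb⟩
    exact ⟨Sum.inr (e, b), hb, rfl⟩

theorem arc_src_true {G : Multigraph V E} {a : Arc V E} {v : V}
    (h : asrcG G a = (v, true)) : ∃ x : E × Bool, a = Sum.inr x := by
  rcases a with ⟨v', j⟩ | x
  · simp only [asrcG, Prod.mk.injEq] at h
    exact absurd h.2 (by simp)
  · exact ⟨x, rfl⟩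

theorem arc_tgt_false {G : Multigraph V E} {a : Arc V E} {v : V}
    (h : atgtG G a = (v, false)) : ∃ x : E × Bool, a = Sum.inr x := by
  rcases a with ⟨v', j⟩ | x
  · simp only [atgtG, Prod.mk.injEq] at h
    exact absurd h.2 (by simp)
  · exact ⟨x, rfl⟩

theorem edge_arc_ends (G : Multigraph V E) (e : E) (b : Bool) :
    ∃ u y, asrcG G (.inr (e, b)) = (u, true) ∧ atgtG G (.inr (e, b)) = (y, false) ∧
      G.ends e = s(u, y) := by
  have hr := G.rep_spec e
  cases b
  · exact ⟨(G.rep e).2, (G.rep e).1, by simp [asrcG], by simp [atgtG],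
      by rw [hr, Sym2.eq_swap]⟩
  · exact ⟨(G.rep e).1, (G.rep e).2, by simp [asrcG], by simp [atgtG], hr⟩

/-- Converting a diwalk of the split network into a walk of `G`. -/
theorem dw_toWalk (G : Multigraph V E) (s t : V) (l : ℕ) (S' : Set (Arc V E))
    (hS' : S' ⊆ S1 G s t l) :
    ∀ (L : List (Arc V E)) (u : V), u ≠ t →
      Dw (asrcG G) (atgtG G) S' (u, true) L (t, false) →
      ∃ q : G.Walk u t, q.edges = edgesOf L ∧ q.support = u :: (vertsOf L ++ [t]) := by
  intro L
  generalize hn : L.length = n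
  induction n using Nat.strong_induction_on generalizing L with
  | _ n ih =>
    intro u hut hdw
    generalize hz : ((u, true) : V × Bool) = z at hdw
    cases hdw with
    | nil => exact absurd (congrArg Prod.snd hz) (by simp)
    | @cons w₀ L₀ a ha p =>
      -- first arc must be an edge arc
      obtain ⟨⟨e, b⟩, rfl⟩ := arc_src_true (G := G) hz.symm
      have heG : e ∈ G.edgeSet := hS' ha
      obtain ⟨u', y, hsrc', htgt, hends0⟩ := edge_arc_ends G e b
      have huu : u' = u := by
        exact (Prod.ext_iff.1 (hsrc'.symm.trans hz.symm)).1
      subst huu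
      rw [htgt] at p
      generalize hz' : ((y, false) : V × Bool) = z' at p
      cases p with
      | nil =>
        have hyt : y = t := congrArg Prod.fst hz'
        subst hyt
        refine ⟨Walk.cons e heG hends0 (Walk.nil y), ?_, ?_⟩
        · simp [Walk.edges]
        · simp [Walk.support]
      | @cons w₁ L₁ a' ha' p' =>
        obtain ⟨j, rfl⟩ := arc_src_false (G := G) hz'.symm
        have hyS := hS' ha'
        have hyst : y ≠ s ∧ y ≠ t := ⟨hyS.1, hyS.2.1⟩
        have htgt' : atgtG G (Sum.inl (y, j)) = (y, true) := rfl
        rw [htgt'] at p'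
        subst hn
        obtain ⟨q', hq'e, hq's⟩ := ih L₁.length (by simp only [List.length_cons]; omega) L₁ rfl y hyst.2 p'
        refine ⟨Walk.cons e heG hends0 q', ?_, ?_⟩
        · rw [Walk.edges, hq'e]
          simp
        · rw [Walk.support, hq's]
          simp

end Multigraph
namespace Multigraph

variable {V E : Type}

open MGFlow

/-- The arc set of the unit-vertex-capacity network inside the flow `f₁`. -/
def S2 (G : Multigraph V E) (s t : V) (f₁ : Finset (Arc V E)) : Set (Arc V E) :=
  {a | match a with
    | .inl (v, i) => v ≠ s ∧ v ≠ t ∧ i = 0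
    | .inr x => (Sum.inr x : Arc V E) ∈ f₁}

theorem S2_sub_S1 {G : Multigraph V E} {s t : V} {l : ℕ} {f₁ : Finset (Arc V E)}
    (hl : 1 ≤ l) (hfS : (↑f₁ : Set (Arc V E)) ⊆ S1 G s t l) :
    S2 G s t f₁ ⊆ S1 G s t l := by
  rintro (⟨v, i⟩ | x) ha
  · exact ⟨ha.1, ha.2.1, lt_of_lt_of_le (by rw [ha.2.2]; omega) le_rfl⟩
  · exact hfS ha

def proj0 : Arc V E → Arc V E
  | .inl (v, _) => .inl (v, 0)
  | .inr x => .inr x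

@[simp] theorem asrc_proj0 (G : Multigraph V E) (a : Arc V E) :
    asrcG G (proj0 a) = asrcG G a := by
  rcases a with ⟨v, i⟩ | x <;> rfl

@[simp] theorem atgt_proj0 (G : Multigraph V E) (a : Arc V E) :
    atgtG G (proj0 a) = atgtG G a := by
  rcases a with ⟨v, i⟩ | x <;> rfl

theorem mem_inr_map_proj0 {L : List (Arc V E)} {x : E × Bool} :
    (Sum.inr x : Arc V E) ∈ L.map proj0 ↔ (Sum.inr x : Arc V E) ∈ L := by
  induction L with
  | nil => simp
  | cons a L ih =>
    rcases a with ⟨v, i⟩ | x'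
    · simp only [List.map_cons, List.mem_cons, ih, proj0]
      constructor
      · rintro (h | h)
        · exact absurd h (by simp)
        · exact Or.inr h
      · rintro (h | h)
        · exact absurd h (by simp)
        · exact Or.inr h
    · simp only [List.map_cons, List.mem_cons, ih, proj0]

theorem vertsOf_map_proj0 {L : List (Arc V E)} : vertsOf (L.map proj0) = vertsOf L := by
  induction L with
  | nil => rfl
  | cons a L ih =>
    rcases a with ⟨v, i⟩ | x
    · simp only [List.map_cons, proj0]
      rw [vertsOf_cons_inl, vertsOf_cons_inl, ih]
    · simp only [List.map_cons, proj0]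
      rw [vertsOf_cons_inr, vertsOf_cons_inr, ih]

theorem dw_proj0 {G : Multigraph V E} {s t : V} {l : ℕ} {f₁ : Finset (Arc V E)}
    (hfS : (↑f₁ : Set (Arc V E)) ⊆ S1 G s t l) :
    ∀ {z w : V × Bool} {L : List (Arc V E)}, Dw (asrcG G) (atgtG G) (↑f₁) z L w →
      Dw (asrcG G) (atgtG G) (S2 G s t f₁) z (L.map proj0) w := by
  intro z w L h
  induction h with
  | nil v => exact .nil v
  | cons a ha p ih =>
    rw [List.map_cons]
    refine Dw.cons' (proj0 a) ?_ (asrc_proj0 G a) ?_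
    · rcases a with ⟨v, i⟩ | x
      · have := hfS ha
        exact ⟨this.1, this.2.1, rfl⟩
      · exact ha
    · rw [atgt_proj0]
      exact ih

theorem dw_prev {G : Multigraph V E} {S' : Set (Arc V E)} :
    ∀ {z w : V × Bool} {L : List (Arc V E)}, Dw (asrcG G) (atgtG G) S' z L w →
      ∀ (v : V) (i : ℕ), Sum.inl (v, i) ∈ L →
        z = (v, false) ∨ ∃ a' ∈ L, atgtG G a' = (v, false) := by
  intro z w L h
  induction h with
  | nil v => simp
  | cons a ha p ih =>
    intro v i hmem
    rcases List.mem_cons.1 hmem with rfl | hmem'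
    · exact Or.inl rfl
    · rcases ih v i hmem' with h' | ⟨a', ha', htg⟩
      · exact Or.inr ⟨a, List.mem_cons_self, h'⟩
      · exact Or.inr ⟨a', List.mem_cons_of_mem _ ha', htg⟩

theorem nodup_filterMap {α β : Type*} (f : α → Option β) :
    ∀ {L : List α}, L.Nodup →
      (∀ a ∈ L, ∀ b ∈ L, ∀ c, f a = some c → f b = some c → a = b) →
      (L.filterMap f).Nodup := by
  intro L
  induction L with
  | nil => simp
  | cons a L ih =>
    intro hnd hinj
    rw [List.filterMap_cons]
    cases h : f a with
    | none =>
      exact ih (List.nodup_cons.1 hnd).2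
        (fun x hx y hy c h1 h2 => hinj x (List.mem_cons_of_mem _ hx) y
          (List.mem_cons_of_mem _ hy) c h1 h2)
    | some c =>
      refine List.nodup_cons.2 ⟨?_, ih (List.nodup_cons.1 hnd).2
        (fun x hx y hy c' h1 h2 => hinj x (List.mem_cons_of_mem _ hx) y
          (List.mem_cons_of_mem _ hy) c' h1 h2)⟩
      intro hc
      obtain ⟨b, hbL, hfb⟩ := List.mem_filterMap.1 hc
      have : a = b := hinj a (List.mem_cons_self) b (List.mem_cons_of_mem _ hbL) c h hfb
      exact (List.nodup_cons.1 hnd).1 (this ▸ hbL)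

theorem dw_subst {G : Multigraph V E} {S' : Set (Arc V E)} (g : Finset (Arc V E)) :
    ∀ {z w : V × Bool} {L : List (Arc V E)}, Dw (asrcG G) (atgtG G) S' z L w → L.Nodup →
      (vertsOf L).Nodup →
      (∀ x : E × Bool, (Sum.inr x : Arc V E) ∈ L → (Sum.inr x : Arc V E) ∈ g) →
      (∀ v ∈ vertsOf L, ∃ j, (Sum.inl (v, j) : Arc V E) ∈ g) →
      ∃ L', Dw (asrcG G) (atgtG G) (↑g) z L' w ∧ L'.Nodup ∧
        (∀ x : E × Bool, ((Sum.inr x : Arc V E) ∈ L' ↔ (Sum.inr x : Arc V E) ∈ L)) ∧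
        vertsOf L' = vertsOf L ∧ edgesOf L' = edgesOf L := by
  intro z w L h
  induction h with
  | nil v => exact fun _ _ _ _ => ⟨[], .nil v, by simp, by simp, rfl, rfl⟩
  | cons a ha p ih =>
    intro hnd hvnd hxg hvg
    rcases a with ⟨v, i⟩ | x
    · obtain ⟨j, hj⟩ := hvg v (by rw [vertsOf_cons_inl]; exact List.mem_cons_self)
      rw [vertsOf_cons_inl] at hvnd
      obtain ⟨L', hdw', hnd', hiff', hv', he'⟩ := ih (List.nodup_cons.1 hnd).2
        (List.nodup_cons.1 hvnd).2
        (fun x hx => hxg x (List.mem_cons_of_mem _ hx))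
        (fun v' hv' => hvg v' (by rw [vertsOf_cons_inl]; exact List.mem_cons_of_mem _ hv'))
      refine ⟨Sum.inl (v, j) :: L', ?_, ?_, ?_, ?_, ?_⟩
      · exact Dw.cons' _ (by exact_mod_cast hj) rfl hdw'
      · refine List.nodup_cons.2 ⟨?_, hnd'⟩
        intro hc
        have : v ∈ vertsOf L' := mem_vertsOf.2 ⟨j, hc⟩
        rw [hv'] at this
        exact (List.nodup_cons.1 hvnd).1 this
      · intro x
        simp only [List.mem_cons]
        constructor
        · rintro (h | h)
          · exact absurd h (by simp)
          · exact Or.inr ((hiff' x).1 h)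
        · rintro (h | h)
          · exact absurd h (by simp)
          · exact Or.inr ((hiff' x).2 h)
      · rw [vertsOf_cons_inl, vertsOf_cons_inl, hv']
      · rw [edgesOf_cons_inl, edgesOf_cons_inl, he']
    · rw [vertsOf_cons_inr] at hvnd
      obtain ⟨L', hdw', hnd', hiff', hv', he'⟩ := ih (List.nodup_cons.1 hnd).2 hvnd
        (fun x' hx' => hxg x' (List.mem_cons_of_mem _ hx'))
        (fun v' hv' => hvg v' (by rw [vertsOf_cons_inr]; exact hv'))
      refine ⟨Sum.inr x :: L', ?_, ?_, ?_, ?_, ?_⟩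
      · exact Dw.cons' _ (by exact_mod_cast hxg x (List.mem_cons_self)) rfl hdw'
      · refine List.nodup_cons.2 ⟨?_, hnd'⟩
        intro hc
        exact (List.nodup_cons.1 hnd).1 ((hiff' x).1 hc)
      · intro x'
        simp only [List.mem_cons, hiff' x']
      · rw [vertsOf_cons_inr, vertsOf_cons_inr, hv']
      · rcases x with ⟨e, b⟩
        rw [edgesOf_cons_inr, edgesOf_cons_inr, he']

end Multigraph
open MGFlow in
open Multigraph in
/-- If `(1, l)` is a connectivity pair for `s` and `t` with `l ≥ 1`, then there are
`l + 1` edge-disjoint `s`-`t` paths of which two are internally disjoint. -/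
theorem connectivity_pair_order_one {V E : Type} (G : Multigraph V E) (s t : V)
    (hst : s ≠ t) (l : ℕ) (hl : 1 ≤ l) (h : G.ConnectivityPair s t 1 l) :
    HasGoodPaths G s t 1 l := by
  classical
  obtain ⟨m, rfl⟩ : ∃ m, l = m + 1 := ⟨l - 1, by omega⟩
  set l := m + 1 with hldef
  obtain ⟨-, hneg⟩ := h
  have hστ : ((s, true) : V × Bool) ≠ (t, false) := by simp
  -- maximum flow in the capacitated split network
  obtain ⟨f₁, hf₁, hmin⟩ := exists_min_flow
    (flow_exists (hnlG G) hστ (hyp_S1 G s t hst l hl hneg))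
  have hNB := fun e => no_both G s t hst l hf₁ hmin e
  have hf₁S : (↑f₁ : Set (Arc V E)) ⊆ S1 G s t l := hf₁.1
  -- decompose it into l+1 trails
  obtain ⟨T, hT, hTd⟩ := flow_decompose (hnlG G) hστ (l + 1) f₁ hf₁
  have hTg : ∀ i, ∀ a ∈ T i, a ∈ f₁ := fun i => (hT i).2.2
  -- the small cut hypothesis for the vertex-capacity-one network inside f₁
  have hyp2 : ∀ F : Finset (Arc V E), (↑F : Set (Arc V E)) ⊆ S2 G s t f₁ → F.card ≤ 1 →
      ∃ L, Dw (asrcG G) (atgtG G) (S2 G s t f₁) (s, true) L (t, false) ∧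
        ∀ a ∈ L, a ∉ F := by
    intro F hFS hFcard
    have hne : Nonempty (Arc V E) := ⟨Sum.inl (s, 0)⟩
    obtain ⟨x0, hx0⟩ := Finset.card_le_one_iff_subset_singleton.1 hFcard
    have hproj : ∀ j : Fin (l + 1),
        Dw (asrcG G) (atgtG G) (S2 G s t f₁) (s, true) ((T j).map proj0) (t, false) :=
      fun j => dw_proj0 hf₁S (hT j).1
    rcases hx0ty : x0 with ⟨v, i⟩ | x
    · -- a vertex arc is blocked; some trail avoids the vertex
      have : ∃ j : Fin (l + 1), ∀ i', Sum.inl (v, i') ∉ T j := by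
        by_contra hc
        push_neg at hc
        choose φ hφ using hc
        have hφlt : ∀ j, φ j < l := by
          intro j
          have := hf₁S (hTg j _ (hφ j))
          exact this.2.2
        have hinj : Function.Injective φ := by
          intro j j' hjj
          by_contra hne'
          exact hTd j j' hne' _ (hφ j) (hjj ▸ hφ j')
        have hcard : (Finset.univ.image φ).card ≤ (Finset.range l).card := by
          refine Finset.card_le_card ?_
          intro c hc'
          obtain ⟨j, _, rfl⟩ := Finset.mem_image.1 hc'
          exact Finset.mem_range.2 (hφlt j)
        rw [Finset.card_image_of_injective _ hinj, Finset.card_range, Finset.card_univ,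
          Fintype.card_fin] at hcard
        omega
      obtain ⟨j, hj⟩ := this
      refine ⟨(T j).map proj0, hproj j, ?_⟩
      intro a ha haF
      have := hx0 haF
      rw [Finset.mem_singleton] at this
      subst this
      rw [hx0ty] at ha
      have : v ∈ vertsOf ((T j).map proj0) := mem_vertsOf.2 ⟨i, ha⟩
      rw [vertsOf_map_proj0] at this
      obtain ⟨i', hi'⟩ := mem_vertsOf.1 this
      exact hj i' hi'
    · -- an edge arc is blocked; some trail avoids the arc
      have : ∃ j : Fin (l + 1), (Sum.inr x : Arc V E) ∉ T j := by
        by_contra hc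
        push_neg at hc
        have h01 : (0 : Fin (l + 1)) ≠ 1 := by
          intro hc'
          have := congrArg Fin.val hc'
          simp [Fin.val_zero, Fin.val_one] at this
        exact hTd 0 1 h01 _ (hc 0) (hc 1)
      obtain ⟨j, hj⟩ := this
      refine ⟨(T j).map proj0, hproj j, ?_⟩
      intro a ha haF
      have := hx0 haF
      rw [Finset.mem_singleton] at this
      subst this
      rw [hx0ty] at ha
      exact hj (mem_inr_map_proj0.1 ha)
  -- a 2-unit flow in the vertex-capacity-one network
  obtain ⟨g₂, hg₂⟩ := flow_exists (hnlG G) hστ (n := 1) hyp2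
  have hg₂S2 : (↑g₂ : Set (Arc V E)) ⊆ S2 G s t f₁ := hg₂.1
  have hg₂S1 : (↑g₂ : Set (Arc V E)) ⊆ S1 G s t l := subset_trans hg₂S2 (S2_sub_S1 hl hf₁S)
  obtain ⟨T2, hT2, hT2d⟩ := flow_decompose (hnlG G) hστ 2 g₂ hg₂
  -- the two vertex-disjoint trails
  have hT2g : ∀ i, ∀ a ∈ T2 i, a ∈ g₂ := fun i => (hT2 i).2.2
  have hvertsT2 : ∀ (i : Fin 2) (v : V), v ∈ vertsOf (T2 i) →
      (Sum.inl (v, 0) : Arc V E) ∈ T2 i ∧ v ≠ s ∧ v ≠ t := by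
    intro i v hv
    obtain ⟨j, hj⟩ := mem_vertsOf.1 hv
    have hS2 := hg₂S2 (hT2g i _ hj)
    obtain ⟨h1, h2, h3⟩ := hS2
    exact ⟨h3 ▸ hj, h1, h2⟩
  have hvnd : ∀ i : Fin 2, (vertsOf (T2 i)).Nodup := by
    intro i
    refine nodup_filterMap _ (hT2 i).2.1 ?_
    rintro (⟨va, ja⟩ | xa) ha (⟨vb, jb⟩ | xb) hb c hfa hfb
    · simp only [Option.some.injEq] at hfa hfb
      have hja := (hg₂S2 (hT2g i _ ha)).2.2
      have hjb := (hg₂S2 (hT2g i _ hb)).2.2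
      rw [hfa, hfb, hja, hjb]
    · simp at hfb
    · simp at hfa
    · simp at hfa
  have hq : ∀ i : Fin 2, ∃ q : G.Walk s t, q.edges = edgesOf (T2 i) ∧
      q.support = s :: (vertsOf (T2 i) ++ [t]) :=
    fun i => dw_toWalk G s t l (↑g₂) hg₂S1 (T2 i) s hst (hT2 i).1
  obtain ⟨q0, hq0e, hq0s⟩ := hq 0
  obtain ⟨q1, hq1e, hq1s⟩ := hq 1
  have hstverts : ∀ (i : Fin 2), s ∉ vertsOf (T2 i) ∧ t ∉ vertsOf (T2 i) := by
    intro i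
    constructor
    · intro hc
      exact (hvertsT2 i s hc).2.1 rfl
    · intro hc
      exact (hvertsT2 i t hc).2.2 rfl
  have hqpath : ∀ (i : Fin 2) (q : G.Walk s t), q.support = s :: (vertsOf (T2 i) ++ [t]) →
      q.IsPath := by
    intro i q hsup
    rw [Walk.IsPath, hsup]
    refine List.nodup_cons.2 ⟨?_, ?_⟩
    · rw [List.mem_append, List.mem_singleton]
      rintro ((hc : s ∈ _) | rfl)
      · exact (hstverts i).1 hc
      · exact hst rfl
    · rw [List.nodup_append]
      exact ⟨hvnd i, List.nodup_singleton _,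
        fun v hv b hv' hvb => by subst hvb; exact (hstverts i).2 ((List.mem_singleton.1 hv') ▸ hv)⟩
  have hq0p : q0.IsPath := hqpath 0 q0 hq0s
  have hq1p : q1.IsPath := hqpath 1 q1 hq1s
  have h01 : (0 : Fin 2) ≠ 1 := by decide
  -- internal disjointness of q0 and q1
  have hID : ∀ v, v ∈ q0.support → v ∈ q1.support → v = s ∨ v = t := by
    intro v hv0 hv1
    rw [hq0s] at hv0
    rw [hq1s] at hv1
    rcases List.mem_cons.1 hv0 with rfl | hv0'
    · exact Or.inl rfl
    rcases List.mem_append.1 hv0' with hv0'' | hv0''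
    swap
    · exact Or.inr (List.mem_singleton.1 hv0'')
    rcases List.mem_cons.1 hv1 with rfl | hv1'
    · exact Or.inl rfl
    rcases List.mem_append.1 hv1' with hv1'' | hv1''
    swap
    · exact Or.inr (List.mem_singleton.1 hv1'')
    exfalso
    exact hT2d 0 1 h01 _ (hvertsT2 0 v hv0'').1 (hvertsT2 1 v hv1'').1
  -- lift the two trails into the flow f₁ and remove them
  have hedge_mem : ∀ (i : Fin 2) (x : E × Bool), (Sum.inr x : Arc V E) ∈ T2 i →
      (Sum.inr x : Arc V E) ∈ f₁ := by
    intro i x hx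
    exact hg₂S2 (hT2g i _ hx)
  have hva0 : ∀ v ∈ vertsOf (T2 0), ∃ j, (Sum.inl (v, j) : Arc V E) ∈ f₁ := by
    intro v hv
    obtain ⟨j0, hj0⟩ := mem_vertsOf.1 hv
    have hvst := (hvertsT2 0 v hv).2
    rcases dw_prev (hT2 0).1 v j0 hj0 with hz | ⟨a', ha', htg⟩
    · exact absurd (congrArg Prod.snd hz) (by simp)
    · obtain ⟨x', rfl⟩ := arc_tgt_false (G := G) htg
      have hxf : (Sum.inr x' : Arc V E) ∈ f₁ := hg₂S2 (hT2g 0 _ ha')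
      have hIn : 1 ≤ cIn (atgtG G) f₁ (v, false) := cIn_pos hxf htg
      have hcons := hf₁.2.1 (v, false) (by simp) (by simp [hvst.2])
      obtain ⟨a'', ha'', hsrc''⟩ := cOut_exists (f := f₁) (v := ((v : V), false))
        (hcons ▸ hIn)
      obtain ⟨j, rfl⟩ := arc_src_false (G := G) hsrc''
      exact ⟨j, ha''⟩
  obtain ⟨L0', hdw0', hnd0', hiff0, hv0eq, he0eq⟩ :=
    dw_subst f₁ (hT2 0).1 (hT2 0).2.1 (hvnd 0) (hedge_mem 0) hva0
  have hmem0' : ∀ a ∈ L0', a ∈ f₁ := fun a ha => by exact_mod_cast hdw0'.mem_of a ha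
  have hf₁' := flow_remove_trail (S := S1 G s t l) hστ hf₁ hdw0' hnd0' hmem0'
  set f₁' : Finset (Arc V E) := f₁ \ L0'.toFinset with hf₁'def
  -- second trail, in the reduced flow
  have hedge_mem1 : ∀ x : E × Bool, (Sum.inr x : Arc V E) ∈ T2 1 →
      (Sum.inr x : Arc V E) ∈ f₁' := by
    intro x hx
    rw [hf₁'def, Finset.mem_sdiff]
    refine ⟨hedge_mem 1 x hx, ?_⟩
    intro hc
    have : (Sum.inr x : Arc V E) ∈ T2 0 := (hiff0 x).1 (List.mem_toFinset.1 hc)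
    exact hT2d 1 0 h01.symm _ hx this
  have hva1 : ∀ v ∈ vertsOf (T2 1), ∃ j, (Sum.inl (v, j) : Arc V E) ∈ f₁' := by
    intro v hv
    obtain ⟨j0, hj0⟩ := mem_vertsOf.1 hv
    have hvst := (hvertsT2 1 v hv).2
    rcases dw_prev (hT2 1).1 v j0 hj0 with hz | ⟨a', ha', htg⟩
    · exact absurd (congrArg Prod.snd hz) (by simp)
    · obtain ⟨x', rfl⟩ := arc_tgt_false (G := G) htg
      have hxf : (Sum.inr x' : Arc V E) ∈ f₁' := hedge_mem1 x' ha'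
      have hIn : 1 ≤ cIn (atgtG G) f₁' (v, false) := cIn_pos hxf htg
      have hcons := hf₁'.2.1 (v, false) (by simp) (by simp [hvst.2])
      obtain ⟨a'', ha'', hsrc''⟩ := cOut_exists (f := f₁') (v := ((v : V), false))
        (hcons ▸ hIn)
      obtain ⟨j, rfl⟩ := arc_src_false (G := G) hsrc''
      exact ⟨j, ha''⟩
  obtain ⟨L1', hdw1', hnd1', hiff1, hv1eq, he1eq⟩ :=
    dw_subst f₁' (hT2 1).1 (hT2 1).2.1 (hvnd 1) hedge_mem1 hva1
  have hmem1' : ∀ a ∈ L1', a ∈ f₁' := fun a ha => by exact_mod_cast hdw1'.mem_of a ha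
  have hf₂ := flow_remove_trail (S := S1 G s t l) hστ hf₁' hdw1' hnd1' hmem1'
  set f₂ : Finset (Arc V E) := f₁' \ L1'.toFinset with hf₂def
  have hf₂f₁ : ∀ a ∈ f₂, a ∈ f₁ ∧ a ∉ L0' ∧ a ∉ L1' := by
    intro a ha
    rw [hf₂def, Finset.mem_sdiff, hf₁'def, Finset.mem_sdiff] at ha
    exact ⟨ha.1.1, fun hc => ha.1.2 (List.mem_toFinset.2 hc),
      fun hc => ha.2 (List.mem_toFinset.2 hc)⟩
  have hf₂S1 : (↑f₂ : Set (Arc V E)) ⊆ S1 G s t l := hf₂.1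
  -- decompose the remainder into m trails and convert them to paths
  obtain ⟨R, hR, hRd⟩ := flow_decompose (hnlG G) hστ m f₂ hf₂
  have hRg : ∀ i, ∀ a ∈ R i, a ∈ f₂ := fun i => (hR i).2.2
  have hWk : ∀ i : Fin m, ∃ p : G.Walk s t, p.IsPath ∧
      ∀ e ∈ p.edges, e ∈ edgesOf (R i) := by
    intro i
    obtain ⟨W, hWe, hWs⟩ := dw_toWalk G s t l (↑f₂) hf₂S1 (R i) s hst (hR i).1
    obtain ⟨p, hp1, hp2, hp3⟩ := Walk.exists_path W
    exact ⟨p, hp1, fun e he => hWe ▸ hp2 e he⟩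
  choose P2 hP2path hP2edge using hWk
  -- edge membership characterizations
  have hq0E : ∀ e ∈ q0.edges, ∃ b, (Sum.inr (e, b) : Arc V E) ∈ T2 0 := by
    intro e he
    exact mem_edgesOf.1 (hq0e ▸ he)
  have hq1E : ∀ e ∈ q1.edges, ∃ b, (Sum.inr (e, b) : Arc V E) ∈ T2 1 := by
    intro e he
    exact mem_edgesOf.1 (hq1e ▸ he)
  have hpE : ∀ (i : Fin m), ∀ e ∈ (P2 i).edges, ∃ b, (Sum.inr (e, b) : Arc V E) ∈ R i := by
    intro i e he
    exact mem_edgesOf.1 (hP2edge i e he)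
  have hNB' : ∀ (e : E) (b0 b1 : Bool), b0 ≠ b1 → (Sum.inr (e, b0) : Arc V E) ∈ f₁ →
      (Sum.inr (e, b1) : Arc V E) ∈ f₁ → False := by
    intro e b0 b1 hbb h0 h1
    cases b0 <;> cases b1
    · exact hbb rfl
    · exact hNB e ⟨h1, h0⟩
    · exact hNB e ⟨h0, h1⟩
    · exact hbb rfl
  -- pairwise edge-disjointness facts
  have hD01 : ∀ e ∈ q0.edges, e ∉ q1.edges := by
    intro e he0 he1
    obtain ⟨b0, hb0⟩ := hq0E e he0
    obtain ⟨b1, hb1⟩ := hq1E e he1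
    by_cases hbb : b0 = b1
    · subst hbb
      exact hT2d 0 1 h01 _ hb0 hb1
    · exact hNB' e b0 b1 hbb (hedge_mem 0 _ hb0) (hedge_mem 1 _ hb1)
  have hD0R : ∀ (i : Fin m), ∀ e ∈ q0.edges, e ∉ (P2 i).edges := by
    intro i e he0 hei
    obtain ⟨b0, hb0⟩ := hq0E e he0
    obtain ⟨b, hb⟩ := hpE i e hei
    have hbf₂ := hf₂f₁ _ (hRg i _ hb)
    by_cases hbb : b = b0
    · subst hbb
      exact hbf₂.2.1 ((hiff0 (e, b)).2 hb0)
    · exact hNB' e b b0 hbb hbf₂.1 (hedge_mem 0 _ hb0)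
  have hD1R : ∀ (i : Fin m), ∀ e ∈ q1.edges, e ∉ (P2 i).edges := by
    intro i e he1 hei
    obtain ⟨b1, hb1⟩ := hq1E e he1
    obtain ⟨b, hb⟩ := hpE i e hei
    have hbf₂ := hf₂f₁ _ (hRg i _ hb)
    by_cases hbb : b = b1
    · subst hbb
      exact hbf₂.2.2 ((hiff1 (e, b)).2 hb1)
    · exact hNB' e b b1 hbb hbf₂.1 (hedge_mem 1 _ hb1)
  have hDRR : ∀ (i j : Fin m), i ≠ j → ∀ e ∈ (P2 i).edges, e ∉ (P2 j).edges := by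
    intro i j hij e hei hej
    obtain ⟨b, hb⟩ := hpE i e hei
    obtain ⟨b', hb'⟩ := hpE j e hej
    by_cases hbb : b = b'
    · subst hbb
      exact hRd i j hij _ hb hb'
    · exact hNB' e b b' hbb (hf₂f₁ _ (hRg i _ hb)).1 (hf₂f₁ _ (hRg j _ hb')).1
  -- assemble the family of paths
  have hlt0 : 0 < 1 + l := by omega
  have hlt1 : 1 < 1 + l := by omega
  refine ⟨fun i => if h0 : i.val = 0 then q0 else if h1 : i.val = 1 then q1
    else P2 ⟨i.val - 2, by have := i.isLt; omega⟩, ?_, ?_, ?_⟩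
  · intro i
    dsimp only
    split_ifs with h0 h1
    · exact hq0p
    · exact hq1p
    · exact hP2path _
  · intro i j hij
    dsimp only [EdgeDisjoint]
    have hvij : i.val ≠ j.val := fun hc => hij (Fin.ext hc)
    split_ifs with hi0 hj0 hj1 hi1 hj0' hj1'
    · exact absurd (hi0.trans hj0.symm) hvij
    · exact hD01
    · exact fun e he0 hei => hD0R _ e he0 hei
    · exact fun e he1 he0 => hD01 e he0 he1
    · exact absurd (hi1.trans hj1'.symm) hvij
    · exact fun e he1 hei => hD1R _ e he1 hei
    · exact fun e hei he0 => hD0R _ e he0 hei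
    · exact fun e hei he1 => hD1R _ e he1 hei
    · refine hDRR _ _ (fun hc => hvij ?_)
      have := congrArg Fin.val hc
      simp only at this
      have hi := i.isLt
      have hj := j.isLt
      omega
  · refine ⟨{⟨0, hlt0⟩, ⟨1, hlt1⟩}, ?_, ?_⟩
    · rw [Finset.card_insert_of_notMem (by simp [Fin.ext_iff]), Finset.card_singleton]
    · intro i hi j hj hij
      simp only [Finset.mem_insert, Finset.mem_singleton] at hi hj
      have hID' : ∀ v, v ∈ q1.support → v ∈ q0.support → v = s ∨ v = t :=
        fun v h1 h0 => hID v h0 h1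
      rcases hi with rfl | rfl <;> rcases hj with rfl | rfl
      · exact absurd rfl hij
      · dsimp only [InternallyDisjoint]
        rw [dif_pos rfl, dif_neg (by omega), dif_pos rfl]
        exact hID
      · dsimp only [InternallyDisjoint]
        rw [dif_pos rfl, dif_neg (by omega), dif_pos rfl]
        exact hID'
      · exact absurd rfl hij
end

section
/- Let G be a graph with distinct vertices s, t ∈ V(G) and let k be an integer with 0 ≤ k ≤ κ_{G−E(s,t)}(s,t), where κ_{G−E(s,t)}(s,t) is the minimum number of vertices separating s and t in the graph obtained from G by deleting all edges joining s and t. Then there exists a unique integer l_k such that (k, l_k) is a connectivity pair for s and t in G. Moreover, if there exists an s-t disconnecting pair in G of order k and size l, then the unique such l_k satisfies l_k ≤ l. -/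
namespace Multigraph

variable {V E : Type}

/-- Delete a set of edges from a multigraph. -/
def deleteEdges (G : Multigraph V E) (F : Set E) : Multigraph V E :=
  ⟨G.edgeSet \ F, G.ends, fun e he => G.no_loops e he.1⟩

end Multigraph

section Aux
open Multigraph

variable {V E : Type} {G : Multigraph V E}

lemma mg_start_mem_support : ∀ {u v : V} (p : G.Walk u v), u ∈ p.support
  | _, _, .nil _ => by simp [Walk.support]
  | _, _, .cons _ _ _ _ => by simp [Walk.support]

lemma mg_mem_support_of_mem_ends {x : V} : ∀ {u v : V} (p : G.Walk u v) (e : E),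
    e ∈ p.edges → x ∈ G.ends e → x ∈ p.support
  | _, _, .nil _, e, hmem, _ => by simp [Walk.edges] at hmem
  | _, _, .cons e' he h q, e, hmem, hx => by
    simp only [Walk.edges, List.mem_cons] at hmem
    simp only [Walk.support, List.mem_cons]
    rcases hmem with rfl | hmem
    · rw [h, Sym2.mem_iff] at hx
      rcases hx with rfl | rfl
      · exact Or.inl rfl
      · exact Or.inr (mg_start_mem_support q)
    · exact Or.inr (mg_mem_support_of_mem_ends q e hmem hx)

/-- Convert a walk in `G.deleteEdges F₀` into a walk in `G`. -/
def mgOfDelete {F₀ : Set E} : ∀ {u v : V}, (G.deleteEdges F₀).Walk u v → G.Walk u v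
  | _, _, .nil v => .nil v
  | _, _, .cons e he h p => .cons e he.1 h (mgOfDelete p)

lemma mg_support_ofDelete {F₀ : Set E} : ∀ {u v : V} (p : (G.deleteEdges F₀).Walk u v),
    (mgOfDelete p).support = p.support
  | _, _, .nil _ => rfl
  | _, _, .cons e he h p => by
    simp [mgOfDelete, Walk.support, mg_support_ofDelete p]

lemma mg_edges_ofDelete {F₀ : Set E} : ∀ {u v : V} (p : (G.deleteEdges F₀).Walk u v),
    ∀ e ∈ (mgOfDelete p).edges, e ∈ G.edgeSet \ F₀
  | _, _, .nil _ => by simp [mgOfDelete, Walk.edges]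
  | _, _, .cons e' he h p => by
    intro e hmem
    simp only [mgOfDelete, Walk.edges, List.mem_cons] at hmem
    rcases hmem with rfl | hmem
    · exact he
    · exact mg_edges_ofDelete p e hmem

lemma mg_disc_mono {s t : V} {W W' : Finset V} {F : Finset E}
    (h : G.DisconnectingPair s t W F) (hWW : W ⊆ W')
    (hW' : (↑W' : Set V) ⊆ ({s, t} : Set V)ᶜ) : G.DisconnectingPair s t W' F := by
  refine ⟨hW', h.2.1, fun p => ?_⟩
  rcases h.2.2 p with ⟨x, hx, hxW⟩ | hF
  · exact Or.inl ⟨x, hx, hWW hxW⟩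
  · exact Or.inr hF

end Aux

open Multigraph in
/-- For `0 ≤ k ≤ κ_{G - E(s, t)}(s, t)` there is a unique `l` such that `(k, l)` is a
connectivity pair for `s` and `t` in `G`; moreover, if there is an `s`-`t`
disconnecting pair of order `k` and size `l`, then this unique value is at most `l`. -/
theorem second_coordinate_unique {V E : Type} [Fintype V] [Fintype E]
    (G : Multigraph V E) (s t : V) (hst : s ≠ t) (k : ℕ)
    (hk : k ≤ sInf {n | ∃ W : Finset V, (↑W : Set V) ⊆ ({s, t} : Set V)ᶜ ∧ W.card = n ∧
      ∀ p : (G.deleteEdges {e ∈ G.edgeSet | G.ends e = s(s, t)}).Walk s t,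
        ∃ x ∈ p.support, x ∈ W}) :
    (∃! l : ℕ, G.ConnectivityPair s t k l) ∧
    ∀ lk l : ℕ, G.ConnectivityPair s t k lk →
      (∃ (W : Finset V) (F : Finset E),
        G.DisconnectingPair s t W F ∧ W.card = k ∧ F.card = l) →
      lk ≤ l := by
  classical
  set Kset : Set ℕ := {n | ∃ W : Finset V, (↑W : Set V) ⊆ ({s, t} : Set V)ᶜ ∧ W.card = n ∧
      ∀ p : (G.deleteEdges {e ∈ G.edgeSet | G.ends e = s(s, t)}).Walk s t,
        ∃ x ∈ p.support, x ∈ W} with hKset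
  set S : ℕ → Set ℕ := fun j => {l | ∃ (W : Finset V) (F : Finset E),
    G.DisconnectingPair s t W F ∧ W.card ≤ j ∧ F.card = l} with hS
  have hSne : ∀ j, (S j).Nonempty := by
    intro j
    refine ⟨(Set.toFinset G.edgeSet).card, ∅, Set.toFinset G.edgeSet, ⟨?_, ?_, ?_⟩, by simp, rfl⟩
    · simp
    · simp
    · intro p
      cases p with
      | nil => exact absurd rfl hst
      | cons e he h q =>
        exact Or.inr ⟨e, by simp [Multigraph.Walk.edges], by simpa using he⟩
  set g : ℕ → ℕ := fun j => sInf (S j) with hg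
  have hg_mem : ∀ j, ∃ (W : Finset V) (F : Finset E),
      G.DisconnectingPair s t W F ∧ W.card ≤ j ∧ F.card = g j := fun j => Nat.sInf_mem (hSne j)
  have hg_le : ∀ j l, l ∈ S j → g j ≤ l := fun j l h => Nat.sInf_le h
  -- Key replacement step
  have step : ∀ (W : Finset V) (F : Finset E), G.DisconnectingPair s t W F →
      W.card < sInf Kset →
      ∃ (W' : Finset V) (F' : Finset E), G.DisconnectingPair s t W' F' ∧
        W'.card ≤ W.card + 1 ∧ F'.card + 1 ≤ F.card := by
    intro W F hWF hWκ
    have hex : ∃ p : (G.deleteEdges {e ∈ G.edgeSet | G.ends e = s(s, t)}).Walk s t,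
        ∀ x ∈ p.support, x ∉ W := by
      by_contra hcon
      push_neg at hcon
      have hmem : W.card ∈ Kset := ⟨W, hWF.1, rfl, fun p => hcon p⟩
      exact absurd (Nat.sInf_le hmem) (by omega)
    obtain ⟨p, hp⟩ := hex
    rcases hWF.2.2 (mgOfDelete p) with ⟨x, hx, hxW⟩ | ⟨e, he, heF⟩
    · rw [mg_support_ofDelete] at hx
      exact absurd hxW (hp x hx)
    have heGE := mg_edges_ofDelete p e he
    have hnst : G.ends e ≠ s(s, t) := fun h => heGE.2 ⟨heGE.1, h⟩
    have hnd : ¬ (G.ends e).IsDiag := G.no_loops e heGE.1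
    have hrep : ∀ z : Sym2 V, ∃ u v, z = s(u, v) := fun z =>
      Sym2.ind (fun u v => ⟨u, v, rfl⟩) z
    obtain ⟨u, v, huv⟩ := hrep (G.ends e)
    have hune : u ≠ v := by
      rw [huv] at hnd
      simpa using hnd
    have hxex : ∃ x, (x = u ∨ x = v) ∧ x ∉ ({s, t} : Set V) := by
      by_contra hc
      push_neg at hc
      have hu : u = s ∨ u = t := by simpa using hc u (Or.inl rfl)
      have hv : v = s ∨ v = t := by simpa using hc v (Or.inr rfl)
      apply hnst
      rw [huv]
      rcases hu with rfl | rfl <;> rcases hv with rfl | rfl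
      · exact absurd rfl hune
      · rfl
      · exact Sym2.eq_swap
      · exact absurd rfl hune
    obtain ⟨x, hxuv, hxst⟩ := hxex
    have hxe : x ∈ G.ends e := by
      rw [huv]
      rcases hxuv with rfl | rfl
      · exact Sym2.mem_mk_left _ _
      · exact Sym2.mem_mk_right _ _
    refine ⟨insert x W, F.filter (fun e' => x ∉ G.ends e'), ⟨?_, ?_, ?_⟩, ?_, ?_⟩
    · intro y hy
      simp only [Finset.coe_insert, Set.mem_insert_iff] at hy
      rcases hy with rfl | hy
      · exact hxst
      · exact hWF.1 hy
    · intro e' he'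
      exact hWF.2.1 (Finset.mem_coe.mpr (Finset.mem_of_mem_filter e' (Finset.mem_coe.mp he')))
    · intro p2
      rcases hWF.2.2 p2 with ⟨y, hy, hyW⟩ | ⟨e', he', heF'⟩
      · exact Or.inl ⟨y, hy, Finset.mem_insert_of_mem hyW⟩
      · by_cases hxs : x ∈ p2.support
        · exact Or.inl ⟨x, hxs, Finset.mem_insert_self _ _⟩
        · refine Or.inr ⟨e', he', Finset.mem_filter.mpr ⟨heF', fun hxe' => ?_⟩⟩
          exact hxs (mg_mem_support_of_mem_ends p2 e' he' hxe')
    · exact Finset.card_insert_le _ _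
    · have hsub : F.filter (fun e' => x ∉ G.ends e') ⊂ F :=
        Finset.filter_ssubset.mpr ⟨e, heF, not_not.mpr hxe⟩
      have := Finset.card_lt_card hsub
      omega
  -- iterated decrease
  have chain : ∀ d j, j + d ≤ sInf Kset → g (j + d) + d ≤ g j := by
    intro d
    induction d with
    | zero => intro j _; simp
    | succ n ih =>
      intro j hj
      have h1 : g (j + n) + n ≤ g j := ih j (by omega)
      obtain ⟨W, F, hWF, hWc, hFc⟩ := hg_mem (j + n)
      have hWκ : W.card < sInf Kset := by omega
      obtain ⟨W', F', hWF', hW'c, hF'c⟩ := step W F hWF hWκ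
      have h2 : g (j + n + 1) ≤ F'.card := hg_le _ _ ⟨W', F', hWF', by omega, rfl⟩
      show g (j + n + 1) + (n + 1) ≤ g j
      omega
  -- a vertex set of size at least k inside the complement of {s, t}
  have hC : ∃ C : Finset V, (↑C : Set V) ⊆ ({s, t} : Set V)ᶜ ∧ k ≤ C.card := by
    rcases Set.eq_empty_or_nonempty Kset with h | h
    · have h0 : sInf Kset = 0 := by rw [h]; exact Nat.sInf_empty
      exact ⟨∅, by simp, by omega⟩
    · obtain ⟨W₀, hsub, hcard, _⟩ := Nat.sInf_mem h
      exact ⟨W₀, hsub, by omega⟩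
  -- existence of a disconnecting pair of order exactly k and size g k
  have hex_k : ∃ (W : Finset V) (F : Finset E),
      G.DisconnectingPair s t W F ∧ W.card = k ∧ F.card = g k := by
    obtain ⟨W, F, hWF, hWc, hFc⟩ := hg_mem k
    obtain ⟨C, hCsub, hCcard⟩ := hC
    obtain ⟨W', hWW', hW'sub, hW'c⟩ := Finset.exists_subsuperset_card_eq
      (Finset.subset_union_left (s₂ := C)) hWc
      (le_trans hCcard (Finset.card_le_card Finset.subset_union_right))
    refine ⟨W', F, mg_disc_mono hWF hWW' ?_, hW'c, hFc⟩
    intro y hy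
    rcases Finset.mem_union.mp (Finset.mem_coe.mp (hW'sub hy)) with h | h
    · exact hWF.1 (Finset.mem_coe.mpr h)
    · exact hCsub (Finset.mem_coe.mpr h)
  -- (k, g k) is a connectivity pair
  have hcp : G.ConnectivityPair s t k (g k) := by
    refine ⟨hex_k, ?_⟩
    rintro ⟨W, F, hWF, hlt, hWk, hFl⟩
    have h1 : g W.card ≤ F.card := hg_le _ _ ⟨W, F, hWF, le_rfl, rfl⟩
    rcases eq_or_lt_of_le hWk with heq | hltk
    · rw [heq] at h1; omega
    · have hc := chain (k - W.card) W.card (by omega)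
      have heqk : W.card + (k - W.card) = k := by omega
      rw [heqk] at hc
      omega
  -- uniqueness
  have huniq : ∀ l, G.ConnectivityPair s t k l → l = g k := by
    intro l hl
    obtain ⟨⟨W, F, hWF, hWc, hFc⟩, hnex⟩ := hl
    have h1 : g k ≤ l := hg_le _ _ ⟨W, F, hWF, le_of_eq hWc, hFc⟩
    rcases eq_or_lt_of_le h1 with heq | hlt
    · exact heq.symm
    · exfalso
      obtain ⟨W0, F0, hWF0, hW0c, hF0c⟩ := hg_mem k
      exact hnex ⟨W0, F0, hWF0, by omega, hW0c, by omega⟩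
  refine ⟨⟨g k, hcp, huniq⟩, ?_⟩
  rintro lk l hlk ⟨W, F, hWF, hWc, hFc⟩
  rw [huniq lk hlk]
  exact hg_le _ _ ⟨W, F, hWF, le_of_eq hWc, hFc⟩
end
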